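/- arXiv:1412.5622 — 6 statements merged into one kernel-verified Lean document; each statement's English description precedes it below -/
import Mathlib

section
/- The proportion of permutations of order n that are indecomposable tends to 1 as n → ∞; that is, (|{σ ∈ S_n : σ is indecomposable}|)/n! → 1 as n → ∞. -/
open Filter Topology

/-- A permutation `σ` of order `n` is indecomposable if there is no `m` with
`1 ≤ m < n` such that `σ` maps the first `m` elements onto the first `m` elements. -/
def Indecomposable {n : ℕ} (σ : Equiv.Perm (Fin n)) : Prop :=
  ¬ ∃ m : ℕ, 1 ≤ m ∧ m < n ∧ ∀ i : Fin n, ((σ i : ℕ) < m ↔ (i : ℕ) < m)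

lemma card_pres_le (n m : ℕ) (h2 : m < n) :
    Fintype.card {σ : Equiv.Perm (Fin n) // ∀ i : Fin n, ((σ i : ℕ) < m ↔ (i : ℕ) < m)}
      ≤ m.factorial * (n - m).factorial := by
  classical
  have hge : ∀ (σ : {σ : Equiv.Perm (Fin n) // ∀ i : Fin n, ((σ i : ℕ) < m ↔ (i : ℕ) < m)})
      (j : Fin (n - m)), m ≤ (σ.1 ⟨m + j, by omega⟩ : ℕ) := by
    intro σ j
    by_contra h
    have := (σ.2 ⟨m + j, by omega⟩).1 (by omega)
    simp at this
  let F : {σ : Equiv.Perm (Fin n) // ∀ i : Fin n, ((σ i : ℕ) < m ↔ (i : ℕ) < m)} →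
      (Fin m ↪ Fin m) × (Fin (n - m) ↪ Fin (n - m)) := fun σ =>
    (⟨fun i => ⟨(σ.1 ⟨i, by omega⟩ : ℕ), (σ.2 ⟨i, by omega⟩).2 i.2⟩, by
        intro a b hab
        have h1 : (σ.1 ⟨a, by omega⟩ : Fin n) = σ.1 ⟨b, by omega⟩ :=
          Fin.ext (by simpa using congrArg Fin.val hab)
        have h2 := congrArg Fin.val (σ.1.injective h1)
        exact Fin.ext (by simpa using h2)⟩,
     ⟨fun j => ⟨(σ.1 ⟨m + j, by omega⟩ : ℕ) - m, by
          have := hge σ j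
          have := (σ.1 ⟨m + j, by omega⟩).2
          omega⟩, by
        intro a b hab
        have hva := hge σ a
        have hvb := hge σ b
        have h0 : ((σ.1 ⟨m + a, by omega⟩ : Fin n) : ℕ) - m
            = ((σ.1 ⟨m + b, by omega⟩ : Fin n) : ℕ) - m := congrArg Fin.val hab
        have h1 : (σ.1 ⟨m + a, by omega⟩ : Fin n) = σ.1 ⟨m + b, by omega⟩ :=
          Fin.ext (by omega)
        have h2 := congrArg Fin.val (σ.1.injective h1)
        simp at h2
        exact Fin.ext (by omega)⟩)
  have hF : Function.Injective F := by
    intro σ τ h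
    obtain ⟨h1, h2⟩ := Prod.mk.injEq .. ▸ h
    apply Subtype.ext
    apply Equiv.ext
    intro i
    by_cases hi : (i : ℕ) < m
    · have := congrArg (fun e => ((e : Fin m ↪ Fin m) ⟨i, hi⟩ : ℕ)) h1
      change ((σ.1 ⟨i, by omega⟩ : Fin n) : ℕ) = ((τ.1 ⟨i, by omega⟩ : Fin n) : ℕ) at this
      apply Fin.ext
      simpa using this
    · have hj : (i : ℕ) - m < n - m := by have := i.2; omega
      have := congrArg (fun e => ((e : Fin (n-m) ↪ Fin (n-m)) ⟨(i : ℕ) - m, hj⟩ : ℕ)) h2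
      change ((σ.1 ⟨m + ((i : ℕ) - m), by omega⟩ : Fin n) : ℕ) - m = ((τ.1 ⟨m + ((i : ℕ) - m), by omega⟩ : Fin n) : ℕ) - m at this
      have hmi : (⟨m + ((i : ℕ) - m), by omega⟩ : Fin n) = i := Fin.ext (by simp; omega)
      rw [hmi] at this
      have hgσ := hge σ ⟨(i : ℕ) - m, hj⟩
      have hgτ := hge τ ⟨(i : ℕ) - m, hj⟩
      rw [hmi] at hgσ hgτ
      exact Fin.ext (by omega)
  calc Fintype.card {σ : Equiv.Perm (Fin n) // ∀ i : Fin n, ((σ i : ℕ) < m ↔ (i : ℕ) < m)}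
      ≤ Fintype.card ((Fin m ↪ Fin m) × (Fin (n - m) ↪ Fin (n - m))) :=
        Fintype.card_le_of_injective F hF
    _ = m.factorial * (n - m).factorial := by
        simp [Fintype.card_embedding_eq, Nat.descFactorial_self]

lemma card_dec_le' (n : ℕ) : Nat.card {σ : Equiv.Perm (Fin n) // ¬ Indecomposable σ}
      ≤ ∑ m ∈ Finset.Ico 1 n, m.factorial * (n - m).factorial := by
  classical
  rw [Nat.card_eq_fintype_card, Fintype.card_subtype]
  calc (Finset.univ.filter fun σ : Equiv.Perm (Fin n) => ¬ Indecomposable σ).card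
      ≤ ((Finset.Ico 1 n).biUnion fun m => Finset.univ.filter
          fun σ : Equiv.Perm (Fin n) => ∀ i : Fin n, ((σ i : ℕ) < m ↔ (i : ℕ) < m)).card := by
        apply Finset.card_le_card
        intro σ hσ
        simp only [Finset.mem_filter, Indecomposable, not_not] at hσ
        obtain ⟨-, m, h1, h2, h3⟩ := hσ
        simp only [Finset.mem_biUnion, Finset.mem_Ico, Finset.mem_filter, Finset.mem_univ,
          true_and]
        exact ⟨m, ⟨h1, h2⟩, h3⟩
    _ ≤ ∑ m ∈ Finset.Ico 1 n, (Finset.univ.filter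
          fun σ : Equiv.Perm (Fin n) => ∀ i : Fin n, ((σ i : ℕ) < m ↔ (i : ℕ) < m)).card :=
        Finset.card_biUnion_le
    _ ≤ ∑ m ∈ Finset.Ico 1 n, m.factorial * (n - m).factorial := by
        apply Finset.sum_le_sum
        intro m hm
        rw [← Fintype.card_subtype]
        exact card_pres_le n m (Finset.mem_Ico.1 hm).2

lemma helper : ∀ j : ℕ, 2 ≤ j → ∀ n : ℕ, 2 * j ≤ n →
    j.factorial * (n - j).factorial ≤ 2 * (n - 2).factorial := by
  intro j hj
  induction j, hj using Nat.le_induction with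
  | base => intro n hn; simp [Nat.factorial]
  | succ j hj ih =>
    intro n hn
    have ihn := ih n (by omega)
    have hle : (j + 1).factorial * (n - (j + 1)).factorial
        ≤ j.factorial * (n - j).factorial := by
      have hpos : 0 < n - j := by omega
      apply Nat.le_of_mul_le_mul_right _ hpos
      have e1 : (j + 1).factorial * (n - (j + 1)).factorial * (n - j)
          = (j + 1) * (j.factorial * (n - j).factorial) := by
        have : (n - (j+1)).factorial * (n - j) = (n - j).factorial := by
          have : n - j = (n - (j+1)) + 1 := by omega
          rw [this, Nat.factorial_succ]; ring
        calc (j + 1).factorial * (n - (j + 1)).factorial * (n - j)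
            = (j+1).factorial * ((n - (j+1)).factorial * (n - j)) := by ring
          _ = (j+1).factorial * (n - j).factorial := by rw [this]
          _ = (j + 1) * (j.factorial * (n - j).factorial) := by
              rw [Nat.factorial_succ]; ring
      rw [e1]
      have : j + 1 ≤ n - j := by omega
      calc (j + 1) * (j.factorial * (n - j).factorial)
          ≤ (n - j) * (j.factorial * (n - j).factorial) :=
            Nat.mul_le_mul_right _ this
        _ = j.factorial * (n - j).factorial * (n - j) := by ring
    exact hle.trans ihn

lemma term_le (n m : ℕ) (h1 : 2 ≤ m) (h2 : m + 2 ≤ n) :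
    m.factorial * (n - m).factorial ≤ 2 * (n - 2).factorial := by
  rcases le_or_gt (2 * m) n with h | h
  · exact helper m h1 n h
  · have h3 : 2 ≤ n - m := by omega
    have h4 : 2 * (n - m) ≤ n := by omega
    have := helper (n - m) h3 n h4
    have e : n - (n - m) = m := by omega
    rw [e] at this
    rw [mul_comm]
    exact this

lemma sum_le (n : ℕ) (hn : 4 ≤ n) :
    ∑ m ∈ Finset.Ico 1 n, m.factorial * (n - m).factorial ≤ 4 * n * (n - 2).factorial := by
  obtain ⟨k, rfl⟩ : ∃ k, n = k + 1 := ⟨n - 1, by omega⟩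
  rw [Finset.sum_Ico_succ_top (by omega), Finset.sum_eq_sum_Ico_succ_bot (by omega)]
  have hmid : ∑ m ∈ Finset.Ico 2 k, m.factorial * (k + 1 - m).factorial
      ≤ (k + 1) * (2 * (k + 1 - 2).factorial) := by
    calc ∑ m ∈ Finset.Ico 2 k, m.factorial * (k + 1 - m).factorial
        ≤ (Finset.Ico 2 k).card • (2 * (k + 1 - 2).factorial) := by
          apply Finset.sum_le_card_nsmul
          intro m hm
          rw [Finset.mem_Ico] at hm
          exact term_le (k + 1) m hm.1 (by omega)
      _ ≤ (k + 1) * (2 * (k + 1 - 2).factorial) := by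
          rw [smul_eq_mul]
          apply Nat.mul_le_mul_right
          simp [Nat.card_Ico]; omega
  have h1 : (1 : ℕ).factorial * (k + 1 - 1).factorial = k.factorial := by simp
  have hk : k.factorial * (k + 1 - k).factorial = k.factorial := by
    have : k + 1 - k = 1 := by omega
    simp [this]
  rw [h1, hk]
  -- goal: k! + (mid + k!) ≤ 4*(k+1)*(k-1)!
  have hkfac : k.factorial ≤ (k + 1) * (k + 1 - 2).factorial := by
    have e : k = (k - 1) + 1 := by omega
    have e2 : k + 1 - 2 = k - 1 := by omega
    rw [e2]
    calc k.factorial = k * (k-1).factorial := by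
          conv_lhs => rw [e]
          rw [Nat.factorial_succ]; congr 1; omega
      _ ≤ (k + 1) * (k-1).factorial := Nat.mul_le_mul_right _ (by omega)
  have : (1:ℕ) + 1 = 2 := rfl
  rw [this]
  calc k.factorial + ∑ m ∈ Finset.Ico 2 k, m.factorial * (k + 1 - m).factorial + k.factorial
      ≤ (k+1) * (k + 1 - 2).factorial + (k + 1) * (2 * (k + 1 - 2).factorial)
          + (k+1) * (k + 1 - 2).factorial := by
        gcongr
    _ = 4 * (k + 1) * (k + 1 - 2).factorial := by ring

lemma card_indec_le (n : ℕ) :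
    Nat.card {σ : Equiv.Perm (Fin n) // Indecomposable σ} ≤ n.factorial := by
  classical
  rw [Nat.card_eq_fintype_card]
  calc Fintype.card {σ : Equiv.Perm (Fin n) // Indecomposable σ}
      ≤ Fintype.card (Equiv.Perm (Fin n)) := Fintype.card_subtype_le _
    _ = n.factorial := by rw [Fintype.card_perm, Fintype.card_fin]

lemma key (n : ℕ) (hn : 4 ≤ n) :
    n.factorial ≤ Nat.card {σ : Equiv.Perm (Fin n) // Indecomposable σ}
      + 4 * n * (n - 2).factorial := by
  classical
  have hcompl : Fintype.card {σ : Equiv.Perm (Fin n) // ¬ Indecomposable σ}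
      = Fintype.card (Equiv.Perm (Fin n))
        - Fintype.card {σ : Equiv.Perm (Fin n) // Indecomposable σ} :=
    Fintype.card_subtype_compl _
  have hP : Fintype.card (Equiv.Perm (Fin n)) = n.factorial := by rw [Fintype.card_perm, Fintype.card_fin]
  have hle : Fintype.card {σ : Equiv.Perm (Fin n) // Indecomposable σ}
      ≤ Fintype.card (Equiv.Perm (Fin n)) := Fintype.card_subtype_le _
  have hdec : Fintype.card {σ : Equiv.Perm (Fin n) // ¬ Indecomposable σ}
      ≤ 4 * n * (n - 2).factorial := by
    have := (card_dec_le' n).trans (sum_le n hn)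
    rwa [Nat.card_eq_fintype_card] at this
  rw [Nat.card_eq_fintype_card]
  omega

lemma fac_eq (n : ℕ) (hn : 4 ≤ n) :
    (n.factorial : ℝ) = (n : ℝ) * ((n : ℝ) - 1) * ((n - 2).factorial : ℝ) := by
  obtain ⟨k, rfl⟩ : ∃ k, n = k + 2 := ⟨n - 2, by omega⟩
  have : (k + 2).factorial = (k + 2) * (k + 1) * k.factorial := by
    rw [Nat.factorial_succ, Nat.factorial_succ]; ring
  rw [this]
  push_cast
  ring

/-- The proportion of permutations of order `n` that are indecomposable tends
to `1` as `n → ∞`. -/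
theorem tendsto_proportion_indecomposable :
    Tendsto (fun n : ℕ =>
        (Nat.card {σ : Equiv.Perm (Fin n) // Indecomposable σ} : ℝ) / (n.factorial : ℝ))
      atTop (𝓝 1) := by
  have t0 : Tendsto (fun n : ℕ => 4 / ((n : ℝ) - 1)) atTop (𝓝 0) := by
    apply Tendsto.div_atTop tendsto_const_nhds
    simpa [sub_eq_add_neg] using
      tendsto_atTop_add_const_right atTop (-1 : ℝ) tendsto_natCast_atTop_atTop
  have gt1 : Tendsto (fun n : ℕ => 1 - 4 / ((n : ℝ) - 1)) atTop (𝓝 1) := by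
    simpa using tendsto_const_nhds.sub t0
  apply tendsto_of_tendsto_of_tendsto_of_le_of_le' gt1 tendsto_const_nhds
  · filter_upwards [eventually_ge_atTop 4] with n hn
    have hfpos : (0 : ℝ) < (n.factorial : ℝ) := by
      exact_mod_cast n.factorial_pos
    rw [le_div_iff₀ hfpos]
    have hn1 : ((n : ℝ) - 1) ≠ 0 := by
      have : (4 : ℝ) ≤ (n : ℝ) := by exact_mod_cast hn
      nlinarith
    have hkey : (n.factorial : ℝ) - 4 * (n : ℝ) * ((n - 2).factorial : ℝ)
        ≤ (Nat.card {σ : Equiv.Perm (Fin n) // Indecomposable σ} : ℝ) := by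
      have := key n hn
      have := (Nat.cast_le (α := ℝ)).2 this
      push_cast at this
      linarith
    have hdiv : 4 / ((n : ℝ) - 1) * (n.factorial : ℝ)
        = 4 * (n : ℝ) * ((n - 2).factorial : ℝ) := by
      rw [fac_eq n hn]
      field_simp
    calc (1 - 4 / ((n : ℝ) - 1)) * (n.factorial : ℝ)
        = (n.factorial : ℝ) - 4 / ((n : ℝ) - 1) * (n.factorial : ℝ) := by ring
      _ = (n.factorial : ℝ) - 4 * (n : ℝ) * ((n - 2).factorial : ℝ) := by rw [hdiv]
      _ ≤ _ := hkey
  · apply Eventually.of_forall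
    intro n
    have hfpos : (0 : ℝ) < (n.factorial : ℝ) := by exact_mod_cast n.factorial_pos
    rw [div_le_one hfpos]
    exact_mod_cast card_indec_le n
end

section
/- For every integer q ≥ 2, the sets T^q_mon and T^q_hom are equal. -/
open Filter Topology

/-- The type of finite permutations of all orders: a permutation of order `n`
is a bijection of `Fin n` (representing `[n] = {1,…,n}`). -/
abbrev Perms : Type := Σ n : ℕ, Equiv.Perm (Fin n)

/-- Indecomposability for a permutation of arbitrary order. -/
def Perms.Indec (σ : Perms) : Prop := Indecomposable σ.2

/-- `f` is an occurrence of `π` in `σ`: a strictly increasing map preserving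
the relative order of values. -/
def IsOcc {k n : ℕ} (π : Equiv.Perm (Fin k)) (σ : Equiv.Perm (Fin n))
    (f : Fin k → Fin n) : Prop :=
  StrictMono f ∧ ∀ i j : Fin k, π i < π j ↔ σ (f i) < σ (f j)

/-- `Λ(π,σ)`: the number of occurrences of `π` in `σ`. -/
noncomputable def lam {k n : ℕ} (π : Equiv.Perm (Fin k)) (σ : Equiv.Perm (Fin n)) : ℕ :=
  Nat.card {f : Fin k → Fin n // IsOcc π σ f}

/-- The (sub)permutation density `t(π,σ)`. -/
noncomputable def dens {k n : ℕ} (π : Equiv.Perm (Fin k)) (σ : Equiv.Perm (Fin n)) : ℝ :=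
  if k ≤ n then (lam π σ : ℝ) / (n.choose k : ℝ) else 0

/-- The density `t(π,σ)` for permutations of arbitrary orders. -/
noncomputable def subDens (π σ : Perms) : ℝ := dens π.2 σ.2

/-- `f` is a homomorphism from `π` to `σ`: a non-decreasing map preserving inversions. -/
def IsHom {k n : ℕ} (π : Equiv.Perm (Fin k)) (σ : Equiv.Perm (Fin n))
    (f : Fin k → Fin n) : Prop :=
  Monotone f ∧ ∀ i j : Fin k, i < j → π j < π i → σ (f j) < σ (f i)

/-- `f` is a monomorphism from `π` to `σ`: an injective homomorphism. -/
def IsMon {k n : ℕ} (π : Equiv.Perm (Fin k)) (σ : Equiv.Perm (Fin n))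
    (f : Fin k → Fin n) : Prop :=
  IsHom π σ f ∧ Function.Injective f

/-- `Λ_hom(π,σ)`: the number of homomorphisms from `π` to `σ`. -/
noncomputable def lamHom {k n : ℕ} (π : Equiv.Perm (Fin k)) (σ : Equiv.Perm (Fin n)) : ℕ :=
  Nat.card {f : Fin k → Fin n // IsHom π σ f}

/-- `Λ_mon(π,σ)`: the number of monomorphisms from `π` to `σ`. -/
noncomputable def lamMon {k n : ℕ} (π : Equiv.Perm (Fin k)) (σ : Equiv.Perm (Fin n)) : ℕ :=
  Nat.card {f : Fin k → Fin n // IsMon π σ f}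

/-- The monomorphism density `t_mon(π,σ)`. -/
noncomputable def densMon {k n : ℕ} (π : Equiv.Perm (Fin k)) (σ : Equiv.Perm (Fin n)) : ℝ :=
  if k ≤ n then (lamMon π σ : ℝ) / (n.choose k : ℝ) else 0

/-- The homomorphism density `t_hom(π,σ)`. -/
noncomputable def densHom {k n : ℕ} (π : Equiv.Perm (Fin k)) (σ : Equiv.Perm (Fin n)) : ℝ :=
  (lamHom π σ : ℝ) / (((n + k - 1).choose k : ℕ) : ℝ)

/-- Monomorphism density for permutations of arbitrary orders. -/
noncomputable def monDens (π σ : Perms) : ℝ := densMon π.2 σ.2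

/-- Homomorphism density for permutations of arbitrary orders. -/
noncomputable def homDens (π σ : Perms) : ℝ := densHom π.2 σ.2

/-- The set of limit points in `ℝ^r` of the density vectors (with respect to a
density notion `d`) of the permutations `τ 0, …, τ (r-1)`, along sequences of
permutations whose orders tend to infinity. -/
def TsetOf {r : ℕ} (d : Perms → Perms → ℝ) (τ : Fin r → Perms) :
    Set (EuclideanSpace ℝ (Fin r)) :=
  {v | ∃ σs : ℕ → Perms,
        Tendsto (fun n => (σs n).1) atTop atTop ∧
        Tendsto (fun n => (WithLp.toLp 2 (fun i => d (τ i) (σs n)) : EuclideanSpace ℝ (Fin r)))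
          atTop (𝓝 v)}

/-- `τ : Fin r → Perms` enumerates (without repetition) all non-trivial
indecomposable permutations of order at most `q`. -/
def EnumOf (q r : ℕ) (τ : Fin r → Perms) : Prop :=
  Function.Injective τ ∧
    ∀ p : Perms, p ∈ Set.range τ ↔ (2 ≤ p.1 ∧ p.1 ≤ q ∧ Perms.Indec p)

/-- `T^q_mon`: limit points of vectors of monomorphism densities. -/
def TqMon {r : ℕ} (τ : Fin r → Perms) : Set (EuclideanSpace ℝ (Fin r)) :=
  TsetOf monDens τ

/-- `T^q_hom`: limit points of vectors of homomorphism densities. -/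
def TqHom {r : ℕ} (τ : Fin r → Perms) : Set (EuclideanSpace ℝ (Fin r)) :=
  TsetOf homDens τ


section Aux

lemma card_strictMono (k n : ℕ) :
    Nat.card {f : Fin k → Fin n // StrictMono f} = n.choose k := by
  have e : {f : Fin k → Fin n // StrictMono f} ≃ {s : Finset (Fin n) // s.card = k} := by
    refine
      { toFun := fun f => ⟨Finset.univ.map ⟨f.1, f.2.injective⟩, by simp⟩
        invFun := fun s => ⟨s.1.orderEmbOfFin s.2, (s.1.orderEmbOfFin s.2).strictMono⟩
        left_inv := ?_
        right_inv := ?_ }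
    · rintro ⟨f, hf⟩
      refine Subtype.ext ?_
      refine (Finset.orderEmbOfFin_unique _ (fun x => ?_) hf).symm
      simp
    · rintro ⟨s, hs⟩
      refine Subtype.ext ?_
      refine Finset.eq_of_subset_of_card_le (fun x hx => ?_) (by simp [hs])
      simp only [Finset.mem_map, Finset.mem_univ, Function.Embedding.coeFn_mk, true_and] at hx
      obtain ⟨i, rfl⟩ := hx
      exact Finset.orderEmbOfFin_mem s hs i
  rw [Nat.card_congr e, Nat.card_eq_fintype_card, Fintype.card_finset_len]
  simp

lemma strictMono_step {k m : ℕ} {g : Fin k → Fin m} (hg : StrictMono g) :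
    ∀ d t1 (h1 : t1 < k) (h2 : t1 + d < k),
      (g ⟨t1, h1⟩ : ℕ) + d ≤ g ⟨t1 + d, h2⟩ := by
  intro d
  induction d with
  | zero => intro t1 h1 h2; simp
  | succ d ih =>
    intro t1 h1 h2
    have h2' : t1 + d < k := by omega
    have := ih t1 h1 h2'
    have hlt : g ⟨t1 + d, h2'⟩ < g ⟨t1 + (d + 1), h2⟩ := by
      apply hg; simp [Fin.lt_def]
    have := Fin.lt_def.mp hlt
    omega

lemma strictMono_lb {k m : ℕ} {g : Fin k → Fin m} (hg : StrictMono g) (i : Fin k) :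
    (i : ℕ) ≤ g i := by
  have h0 : (0 : ℕ) < k := i.pos
  have h1 : g ⟨0 + i.1, by simpa using i.isLt⟩ = g i := by congr 1; ext; simp
  have h2 := strictMono_step hg i.1 0 h0 (by simpa using i.isLt)
  omega

lemma strictMono_ub {k m : ℕ} {g : Fin k → Fin m} (hg : StrictMono g) (i : Fin k) :
    (g i : ℕ) + k ≤ m + i := by
  have hg' : StrictMono (fun j : Fin k => (g j.rev).rev) := by
    intro a b hab
    have hra : b.rev < a.rev := by simpa [Fin.rev_lt_rev] using hab
    have := hg hra
    simpa [Fin.rev_lt_rev] using this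
  have hlb := strictMono_lb hg' i.rev
  simp only [Fin.rev_rev] at hlb
  have h1 := Fin.val_rev i
  have h2 := Fin.val_rev (g i)
  have h3 := i.isLt
  have h4 := (g i).isLt
  omega

lemma card_monotone (k n : ℕ) :
    Nat.card {f : Fin k → Fin n // Monotone f} = (n + k - 1).choose k := by
  have e : {f : Fin k → Fin n // Monotone f} ≃
      {g : Fin k → Fin (n + k - 1) // StrictMono g} := by
    refine
      { toFun := fun f => ⟨fun i => ⟨f.1 i + i, by
          have h1 := (f.1 i).isLt; have h2 := i.isLt; omega⟩, ?_⟩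
        invFun := fun g => ⟨fun i => ⟨g.1 i - i, by
          have h1 := strictMono_lb g.2 i
          have h2 := strictMono_ub g.2 i
          have h3 := i.isLt; have h4 := (g.1 i).isLt; omega⟩, ?_⟩
        left_inv := ?_
        right_inv := ?_ }
    · intro i j hij
      have h1 := f.2 hij.le
      have h2 := Fin.le_def.mp h1
      have h3 := Fin.lt_def.mp hij
      exact Fin.lt_def.mpr (by simp; omega)
    · intro i j hij
      rcases eq_or_lt_of_le hij with rfl | hlt
      · exact le_refl _
      · have hj : i.1 + (j.1 - i.1) < k := by have := j.isLt; omega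
        have h1 := strictMono_step g.2 (j.1 - i.1) i.1 i.isLt hj
        have h2 : (⟨i.1 + (j.1 - i.1), hj⟩ : Fin k) = j := by ext; simp; omega
        rw [h2] at h1
        have h3 : (⟨i.1, i.isLt⟩ : Fin k) = i := rfl
        rw [h3] at h1
        have h4 := strictMono_lb g.2 i
        have h5 := Fin.lt_def.mp hlt
        exact Fin.le_def.mpr (by simp; omega)
    · rintro ⟨f, hf⟩
      refine Subtype.ext (funext fun i => ?_)
      ext; simp
    · rintro ⟨g, hg⟩
      refine Subtype.ext (funext fun i => ?_)
      have h4 := strictMono_lb hg i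
      ext; simp; omega
  rw [Nat.card_congr e, card_strictMono]

lemma card_split {γ : Type*} [Finite γ] (p q : γ → Prop) :
    Nat.card {x // p x} = Nat.card {x : γ // p x ∧ q x} + Nat.card {x : γ // p x ∧ ¬ q x} := by
  classical
  rw [← Nat.card_sum]
  refine Nat.card_congr ?_
  exact ((Equiv.sumCongr (Equiv.subtypeSubtypeEquivSubtypeInter p q).symm
      (Equiv.subtypeSubtypeEquivSubtypeInter p (fun x => ¬ q x)).symm).trans
      (Equiv.sumCompl (fun x : {x // p x} => q x.1))).symm

lemma nat_card_le {γ : Type*} [Finite γ] (p q : γ → Prop) (h : ∀ x, p x → q x) :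
    Nat.card {x // p x} ≤ Nat.card {x : γ // q x} :=
  Nat.card_le_card_of_injective (fun x => ⟨x.1, h x.1 x.2⟩)
    (fun a b hab => by
      cases a; cases b
      simpa [Subtype.ext_iff] using hab)

section LamFacts

variable {k n : ℕ} (π : Equiv.Perm (Fin k)) (σ : Equiv.Perm (Fin n))

lemma lamMon_le_lamHom : lamMon π σ ≤ lamHom π σ :=
  nat_card_le _ _ (fun _ hf => hf.1)

lemma lamMon_le_choose : lamMon π σ ≤ n.choose k := by
  rw [lamMon, ← card_strictMono k n]
  exact nat_card_le _ _ (fun f hf => hf.1.1.strictMono_of_injective hf.2)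

lemma lamHom_key : lamHom π σ + n.choose k ≤ lamMon π σ + (n + k - 1).choose k := by
  have hsplitH : lamHom π σ = lamMon π σ +
      Nat.card {f : Fin k → Fin n // IsHom π σ f ∧ ¬ Function.Injective f} := by
    rw [lamHom, lamMon, card_split (IsHom π σ) Function.Injective]
    congr 1
  have hsplitM : (n + k - 1).choose k = n.choose k +
      Nat.card {f : Fin k → Fin n // Monotone f ∧ ¬ Function.Injective f} := by
    rw [← card_monotone k n, card_split (Monotone) Function.Injective, ← card_strictMono k n]
    congr 1
    exact Nat.card_congr (Equiv.subtypeEquivRight fun f =>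
      ⟨fun h => h.1.strictMono_of_injective h.2, fun h => ⟨h.monotone, h.injective⟩⟩)
  have hC : Nat.card {f : Fin k → Fin n // IsHom π σ f ∧ ¬ Function.Injective f} ≤
      Nat.card {f : Fin k → Fin n // Monotone f ∧ ¬ Function.Injective f} :=
    nat_card_le _ _ (fun f hf => ⟨hf.1.1, hf.2⟩)
  omega

end LamFacts

lemma abs_bound (A B M N : ℕ) (hAM : A ≤ M) (hAB : A ≤ B) (hBN : B + M ≤ A + N)
    (hM0 : 0 < M) (hN0 : 0 < N) :
    |(B:ℝ)/N - (A:ℝ)/M| ≤ 1 - (M:ℝ)/N := by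
  have hM' : (0:ℝ) < M := by exact_mod_cast hM0
  have hN' : (0:ℝ) < N := by exact_mod_cast hN0
  have key1 : (B:ℝ)*M + M*M ≤ A*N + M*N := by
    have : B*M + M*M ≤ A*N + M*N := by nlinarith
    exact_mod_cast this
  have key2 : (A:ℝ)*N + M*M ≤ B*M + M*N := by
    have : A*N + M*M ≤ B*M + M*N := by nlinarith
    exact_mod_cast this
  rw [abs_sub_le_iff]
  constructor
  · rw [div_sub_div _ _ hN'.ne' hM'.ne', div_le_iff₀ (by positivity)]
    have expand : (1 - (M:ℝ)/N) * (N*M) = N*M - M*M := by field_simp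
    rw [expand]
    nlinarith
  · rw [div_sub_div _ _ hM'.ne' hN'.ne', div_le_iff₀ (by positivity)]
    have expand : (1 - (M:ℝ)/N) * (M*N) = M*N - M*M := by field_simp
    rw [expand]
    nlinarith

lemma choose_ratio (k n : ℕ) (hk : 1 ≤ k) (hkn : k ≤ n) :
    (n + k - 1).choose k * (n - k)^k ≤ n.choose k * (n + k)^k := by
  have hfac : 0 < (Nat.factorial k) := Nat.factorial_pos k
  refine Nat.le_of_mul_le_mul_left ?_ hfac
  calc (Nat.factorial k) * ((n + k - 1).choose k * (n - k)^k)
      = ((n+k-1).descFactorial k) * (n-k)^k := by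
        rw [Nat.descFactorial_eq_factorial_mul_choose]; ring
    _ ≤ (n+k)^k * (n-k)^k := by
        apply Nat.mul_le_mul_right
        calc (n+k-1).descFactorial k ≤ (n+k-1)^k := Nat.descFactorial_le_pow _ _
          _ ≤ (n+k)^k := Nat.pow_le_pow_left (by omega) _
    _ ≤ (n+k)^k * ((Nat.factorial k) * n.choose k) := by
        apply Nat.mul_le_mul_left
        calc (n-k)^k ≤ (n+1-k)^k := Nat.pow_le_pow_left (by omega) _
          _ ≤ n.descFactorial k := Nat.pow_sub_le_descFactorial n k
          _ = (Nat.factorial k) * n.choose k := Nat.descFactorial_eq_factorial_mul_choose n k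
    _ = (Nat.factorial k) * (n.choose k * (n+k)^k) := by ring

lemma key_bound {k n : ℕ} (hk : 1 ≤ k) (hkn : k ≤ n)
    (π : Equiv.Perm (Fin k)) (σ : Equiv.Perm (Fin n)) :
    |densHom π σ - densMon π σ| ≤ 1 - (((n:ℝ) - k)/((n:ℝ) + k))^k := by
  set A := lamMon π σ with hA
  set B := lamHom π σ with hB
  set M := n.choose k with hM
  set N := (n+k-1).choose k with hN
  have hM0 : 0 < M := Nat.choose_pos hkn
  have hN0 : 0 < N := Nat.choose_pos (by omega)
  have hN' : (0:ℝ) < N := by exact_mod_cast hN0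
  have habs : |(B:ℝ)/N - (A:ℝ)/M| ≤ 1 - (M:ℝ)/N :=
    abs_bound A B M N (lamMon_le_choose π σ) (lamMon_le_lamHom π σ)
      (lamHom_key π σ) hM0 hN0
  have hnk : (0:ℝ) < (n:ℝ) + k := by
    have h1 : (1:ℝ) ≤ (k:ℝ) := by exact_mod_cast hk
    have h2 : (0:ℝ) ≤ (n:ℝ) := Nat.cast_nonneg n
    linarith
  have hratio : (((n:ℝ) - k)/((n:ℝ)+k))^k ≤ (M:ℝ)/N := by
    rw [div_pow, div_le_div_iff₀ (pow_pos hnk k) hN']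
    have hnat := choose_ratio k n hk hkn
    have hnat' : ((N * (n-k)^k : ℕ) : ℝ) ≤ ((M * (n+k)^k : ℕ) : ℝ) := Nat.cast_le.mpr hnat
    push_cast [Nat.cast_sub hkn] at hnat'
    linarith
  have hdM : densMon π σ = (A:ℝ)/M := by rw [densMon, if_pos hkn]
  have hdH : densHom π σ = (B:ℝ)/N := by rw [densHom]
  rw [hdH, hdM]
  linarith

lemma tendsto_bound (k : ℕ) :
    Tendsto (fun m : ℕ => 1 - (((m:ℝ) - k)/((m:ℝ) + k))^k) atTop (𝓝 0) := by
  have h1 : Tendsto (fun m : ℕ => ((m:ℝ) - k)/((m:ℝ) + k)) atTop (𝓝 1) := by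
    have heq : (fun m : ℕ => ((m:ℝ) - k)/((m:ℝ) + k)) =ᶠ[atTop]
        (fun m : ℕ => 1 - 2*(k:ℝ)/((m:ℝ)+k)) := by
      filter_upwards [eventually_ge_atTop 1] with m hm
      have hpos : (0:ℝ) < (m:ℝ) + k := by
        have : (1:ℝ) ≤ (m:ℝ) := by exact_mod_cast hm
        positivity
      field_simp
      ring
    rw [tendsto_congr' heq]
    have h2 : Tendsto (fun m : ℕ => 2*(k:ℝ)/((m:ℝ)+k)) atTop (𝓝 0) :=
      Tendsto.div_atTop tendsto_const_nhds
        (tendsto_atTop_add_const_right _ _ tendsto_natCast_atTop_atTop)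
    simpa using tendsto_const_nhds.sub h2
  have h3 := (tendsto_const_nhds (x := (1:ℝ))).sub (h1.pow k)
  simpa using h3

lemma euc_tendsto_iff {r : ℕ} (F : ℕ → EuclideanSpace ℝ (Fin r)) (v : EuclideanSpace ℝ (Fin r)) :
    Tendsto F atTop (𝓝 v) ↔ ∀ i, Tendsto (fun n => F n i) atTop (𝓝 (v i)) := by
  rw [(EuclideanSpace.equiv (Fin r) ℝ).toHomeomorph.isInducing.tendsto_nhds_iff]
  rw [tendsto_pi_nhds]
  rfl

lemma diff_tendsto (π : Perms) (hk : 1 ≤ π.1) (σs : ℕ → Perms)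
    (hσ : Tendsto (fun n => (σs n).1) atTop atTop) :
    Tendsto (fun n => homDens π (σs n) - monDens π (σs n)) atTop (𝓝 0) := by
  apply squeeze_zero_norm'
    (a := fun n => 1 - (((((σs n).1 : ℕ):ℝ) - π.1)/((((σs n).1 : ℕ):ℝ) + π.1))^π.1)
  · filter_upwards [hσ.eventually (eventually_ge_atTop π.1)] with n hn
    rw [Real.norm_eq_abs]
    exact key_bound hk hn π.2 (σs n).2
  · exact (tendsto_bound π.1).comp hσ

lemma tset_subset {r : ℕ} (τ : Fin r → Perms) (d1 d2 : Perms → Perms → ℝ)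
    (hd : ∀ (i : Fin r) (σs : ℕ → Perms), Tendsto (fun n => (σs n).1) atTop atTop →
      Tendsto (fun n => d2 (τ i) (σs n) - d1 (τ i) (σs n)) atTop (𝓝 0)) :
    TsetOf d1 τ ⊆ TsetOf d2 τ := by
  rintro v ⟨σs, h1, h2⟩
  refine ⟨σs, h1, ?_⟩
  rw [euc_tendsto_iff] at h2 ⊢
  intro i
  have h3 := (h2 i).add (hd i σs h1)
  simpa using h3

end Aux

/-- **Observation 1.** For every integer `q ≥ 2`, the sets `T^q_mon` and
`T^q_hom` are equal. -/
theorem TqMon_eq_TqHom (q : ℕ) (hq : 2 ≤ q) (r : ℕ) (τ : Fin r → Perms)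
    (henum : EnumOf q r τ) :
    TqMon τ = TqHom τ := by
  have hτ : ∀ i : Fin r, 1 ≤ (τ i).1 := by
    intro i
    have := (henum.2 (τ i)).1 ⟨i, rfl⟩
    omega
  apply Set.Subset.antisymm
  · exact tset_subset τ monDens homDens (fun i σs hσ => diff_tendsto (τ i) (hτ i) σs hσ)
  · refine tset_subset τ homDens monDens (fun i σs hσ => ?_)
    have h := (diff_tendsto (τ i) (hτ i) σs hσ).neg
    simpa using h
end

section
/- For every integer q ≥ 2, there exists an invertible (non-singular) linear map L : ℝ^r → ℝ^r such that T^q_mon is the image of T^q under L. -/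
open Filter Topology

/-- `T^q`: limit points of vectors of subpermutation densities. -/
def Tq {r : ℕ} (τ : Fin r → Perms) : Set (EuclideanSpace ℝ (Fin r)) :=
  TsetOf subDens τ

section Aux
open Finset

lemma perm_eq_of_lt_iff {k : ℕ} {π π' : Equiv.Perm (Fin k)}
    (h : ∀ i j, π i < π j ↔ π' i < π' j) : π = π' := by
  have hmono : StrictMono (fun a => π' (π.symm a)) := by
    intro a b hab
    exact (h (π.symm a) (π.symm b)).1 (by simpa using hab)
  have hr : Set.range (fun a => π' (π.symm a)) = Set.range (id : Fin k → Fin k) := by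
    rw [Set.range_id]
    exact Set.range_eq_univ.2 ((π'.surjective).comp π.symm.surjective)
  have heq := (@StrictMono.range_inj (Fin k) (Fin k) _ _
    (inferInstance : WellFoundedLT (Fin k)) _ _ hmono strictMono_id).1 hr
  ext i
  have := congrFun heq (π i)
  simp only [Equiv.symm_apply_apply, id_eq] at this
  exact congrArg Fin.val this.symm

lemma exists_pattern {k n : ℕ} (g : Fin k → Fin n) (hg : Function.Injective g) :
    ∃ p : Equiv.Perm (Fin k), ∀ i j, p i < p j ↔ g i < g j := by
  classical
  set s := Tuple.sort g with hs
  have hmono : Monotone (g ∘ s) := Tuple.monotone_sort g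
  have hsm : StrictMono (g ∘ s) :=
    hmono.strictMono_of_injective (hg.comp s.injective)
  refine ⟨s⁻¹, fun i j => ?_⟩
  have h1 : g i = (g ∘ s) (s⁻¹ i) := by simp
  have h2 : g j = (g ∘ s) (s⁻¹ j) := by simp
  rw [← hsm.lt_iff_lt, ← h1, ← h2]

/-- `π'` has at least the inversions of `π`. -/
def InvLe {k : ℕ} (π π' : Equiv.Perm (Fin k)) : Prop :=
  ∀ i j : Fin k, i < j → π j < π i → π' j < π' i

instance {k : ℕ} (π π' : Equiv.Perm (Fin k)) : Decidable (InvLe π π') := by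
  unfold InvLe; infer_instance

lemma occ_unique {k n : ℕ} {π' π'' : Equiv.Perm (Fin k)} {σ : Equiv.Perm (Fin n)}
    {f : Fin k → Fin n} (h1 : IsOcc π' σ f) (h2 : IsOcc π'' σ f) : π' = π'' :=
  perm_eq_of_lt_iff (fun i j => (h1.2 i j).trans (h2.2 i j).symm)

lemma isMon_iff {k n : ℕ} (π : Equiv.Perm (Fin k)) (σ : Equiv.Perm (Fin n))
    (f : Fin k → Fin n) :
    IsMon π σ f ↔ ∃ π', IsOcc π' σ f ∧ InvLe π π' := by
  constructor
  · rintro ⟨⟨hmono, hinv⟩, hinj⟩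
    have hsm : StrictMono f := hmono.strictMono_of_injective hinj
    obtain ⟨p, hp⟩ := exists_pattern (fun i => σ (f i)) (σ.injective.comp hinj)
    refine ⟨p, ⟨hsm, fun i j => hp i j⟩, fun i j hij hπ => (hp j i).2 (hinv i j hij hπ)⟩
  · rintro ⟨π', ⟨hsm, hiff⟩, hle⟩
    exact ⟨⟨hsm.monotone, fun i j hij hπ => (hiff j i).1 (hle i j hij hπ)⟩, hsm.injective⟩

lemma lamMon_eq_sum {k n : ℕ} (π : Equiv.Perm (Fin k)) (σ : Equiv.Perm (Fin n)) :
    lamMon π σ = ∑ π' : Equiv.Perm (Fin k), if InvLe π π' then lam π' σ else 0 := by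
  classical
  have hcard : ∀ (P : (Fin k → Fin n) → Prop),
      Nat.card {f : Fin k → Fin n // P f} = (univ.filter P).card := by
    intro P
    rw [Nat.card_eq_fintype_card, Fintype.card_subtype]
  rw [lamMon, hcard]
  have hsplit : (univ.filter (IsMon π σ) : Finset (Fin k → Fin n)) =
      (univ : Finset (Equiv.Perm (Fin k))).biUnion
        (fun π' => univ.filter (fun f => IsOcc π' σ f ∧ InvLe π π')) := by
    ext f
    simp only [mem_filter, mem_univ, true_and, mem_biUnion, isMon_iff]
  rw [hsplit, card_biUnion]
  · refine Finset.sum_congr rfl (fun π' _ => ?_)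
    by_cases h : InvLe π π'
    · rw [if_pos h, lam, hcard]
      congr 1
      ext f
      simp [h]
    · rw [if_neg h]
      simp [h]
  · intro a _ b _ hab
    simp only [Finset.disjoint_left, mem_filter]
    rintro f ⟨_, h1, _⟩ ⟨_, h2, _⟩
    exact hab (occ_unique h1 h2)

lemma densMon_eq_sum {k n : ℕ} (π : Equiv.Perm (Fin k)) (σ : Equiv.Perm (Fin n)) :
    densMon π σ = ∑ π' : Equiv.Perm (Fin k), if InvLe π π' then dens π' σ else 0 := by
  by_cases h : k ≤ n
  · rw [densMon, if_pos h, lamMon_eq_sum]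
    push_cast
    rw [Finset.sum_div]
    refine Finset.sum_congr rfl (fun π' _ => ?_)
    by_cases h' : InvLe π π'
    · rw [if_pos h', if_pos h', _root_.dens, if_pos h]
    · rw [if_neg h', if_neg h']
      simp
  · rw [densMon, if_neg h]
    rw [Finset.sum_eq_zero]
    intro π' _
    rw [_root_.dens, if_neg h]
    simp

end Aux
section Aux2
open Finset

lemma exists_crossing {k : ℕ} (π : Equiv.Perm (Fin k)) (m : ℕ)
    (hnf : ¬ ∀ i : Fin k, ((π i : ℕ) < m ↔ (i : ℕ) < m)) :
    ∃ a b : Fin k, a < b ∧ π b < π a ∧ (a : ℕ) < m ∧ m ≤ (b : ℕ) := by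
  classical
  have himg : ∀ (S : Finset (Fin k)), (∀ i ∈ S, π i ∈ S) → ∀ i, π i ∈ S → i ∈ S := by
    intro S hS i hi
    have hsub : S.image π ⊆ S := by
      intro x hx
      obtain ⟨a, ha, rfl⟩ := Finset.mem_image.1 hx
      exact hS a ha
    have heq : S.image π = S :=
      Finset.eq_of_subset_of_card_le hsub
        (le_of_eq (Finset.card_image_of_injective S π.injective).symm)
    rw [← heq] at hi
    obtain ⟨a, ha, hax⟩ := Finset.mem_image.1 hi
    rwa [← π.injective hax]
  by_cases h1 : ∀ b : Fin k, m ≤ (b : ℕ) → m ≤ (π b : ℕ)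
  · -- then π maps {≥ m} into itself, hence π i < m ↔ i < m, contradiction
    exfalso
    apply hnf
    intro i
    constructor
    · intro hπ
      by_contra him
      have : i ∈ univ.filter (fun j : Fin k => m ≤ (j : ℕ)) := by
        simp; omega
      have := h1 i (by omega)
      omega
    · intro him
      by_contra hπ
      have hmem : π i ∈ univ.filter (fun j : Fin k => m ≤ (j : ℕ)) := by
        simp; omega
      have : i ∈ univ.filter (fun j : Fin k => m ≤ (j : ℕ)) := by
        refine himg _ ?_ i hmem
        intro x hx
        simp only [mem_filter, mem_univ, true_and] at hx ⊢
        exact h1 x hx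
      simp at this
      omega
  · by_cases h2 : ∀ a : Fin k, (a : ℕ) < m → (π a : ℕ) < m
    · -- π maps {< m} into itself, hence same conclusion
      exfalso
      apply hnf
      intro i
      constructor
      · intro hπ
        by_contra him
        have hmem : π i ∈ univ.filter (fun j : Fin k => (j : ℕ) < m) := by
          simp; omega
        have : i ∈ univ.filter (fun j : Fin k => (j : ℕ) < m) := by
          refine himg _ ?_ i hmem
          intro x hx
          simp only [mem_filter, mem_univ, true_and] at hx ⊢
          exact h2 x hx
        simp at this
        omega
      · intro him
        exact h2 i him
    · push_neg at h1 h2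
      obtain ⟨b, hbm, hπb⟩ := h1
      obtain ⟨a, ham, hπa⟩ := h2
      refine ⟨a, b, ?_, ?_, ham, hbm⟩
      · exact Fin.lt_def.2 (by omega)
      · exact Fin.lt_def.2 (by omega)

lemma indec_of_invLe {k : ℕ} {π π' : Equiv.Perm (Fin k)}
    (hind : Indecomposable π) (hle : InvLe π π') : Indecomposable π' := by
  rintro ⟨m, hm1, hmk, hfix⟩
  apply hind
  refine ⟨m, hm1, hmk, ?_⟩
  by_contra hnf
  obtain ⟨a, b, hab, hπ, ham, hbm⟩ := exists_crossing π m hnf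
  have h' := hle a b hab hπ
  have h1 : (π' a : ℕ) < m := (hfix a).2 ham
  have h2 : ¬ ((π' b : ℕ) < m) := fun h => by
    have := (hfix b).1 h
    omega
  have := Fin.lt_def.1 h'
  omega

lemma invLe_antisymm {k : ℕ} {π π' : Equiv.Perm (Fin k)}
    (h1 : InvLe π π') (h2 : InvLe π' π) : π = π' := by
  apply perm_eq_of_lt_iff
  intro i j
  rcases lt_trichotomy i j with hij | hij | hij
  · have hne : (π i : ℕ) ≠ (π j : ℕ) := fun he => hij.ne (π.injective (Fin.ext he))
    have hne' : (π' i : ℕ) ≠ (π' j : ℕ) := fun he => hij.ne (π'.injective (Fin.ext he))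
    have h12 : (π j : ℕ) < (π i : ℕ) → (π' j : ℕ) < (π' i : ℕ) :=
      fun hh => Fin.lt_def.1 (h1 i j hij (Fin.lt_def.2 hh))
    have h21 : (π' j : ℕ) < (π' i : ℕ) → (π j : ℕ) < (π i : ℕ) :=
      fun hh => Fin.lt_def.1 (h2 i j hij (Fin.lt_def.2 hh))
    rw [Fin.lt_def, Fin.lt_def]
    omega
  · subst hij; simp
  · have hne : (π i : ℕ) ≠ (π j : ℕ) := fun he => hij.ne' (π.injective (Fin.ext he))
    have hne' : (π' i : ℕ) ≠ (π' j : ℕ) := fun he => hij.ne' (π'.injective (Fin.ext he))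
    have h12 : (π i : ℕ) < (π j : ℕ) → (π' i : ℕ) < (π' j : ℕ) :=
      fun hh => Fin.lt_def.1 (h1 j i hij (Fin.lt_def.2 hh))
    have h21 : (π' i : ℕ) < (π' j : ℕ) → (π i : ℕ) < (π j : ℕ) :=
      fun hh => Fin.lt_def.1 (h2 j i hij (Fin.lt_def.2 hh))
    rw [Fin.lt_def, Fin.lt_def]
    omega

/-- The set of inversions as a finset. -/
def invSet {k : ℕ} (π : Equiv.Perm (Fin k)) : Finset (Fin k × Fin k) :=
  univ.filter (fun p => p.1 < p.2 ∧ π p.2 < π p.1)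

lemma invSet_subset_of_invLe {k : ℕ} {π π' : Equiv.Perm (Fin k)} (h : InvLe π π') :
    invSet π ⊆ invSet π' := by
  intro p hp
  simp only [invSet, mem_filter, mem_univ, true_and] at hp ⊢
  exact ⟨hp.1, h p.1 p.2 hp.1 hp.2⟩

lemma invSet_card_lt {k : ℕ} {π π' : Equiv.Perm (Fin k)} (h : InvLe π π')
    (hne : π ≠ π') : (invSet π).card < (invSet π').card := by
  apply Finset.card_lt_card
  refine ⟨invSet_subset_of_invLe h, fun hsub => hne (invLe_antisymm h ?_)⟩
  intro i j hij hinv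
  have : (i, j) ∈ invSet π' := by
    simp only [invSet, mem_filter, mem_univ, true_and]
    exact ⟨hij, hinv⟩
  have := hsub this
  simp only [invSet, mem_filter, mem_univ, true_and] at this
  exact this.2

end Aux2
section Aux3
open Finset

/-- Transport a permutation of `Fin k` along an equality of orders. -/
def permCast {k k' : ℕ} (h : k = k') (π : Equiv.Perm (Fin k)) : Equiv.Perm (Fin k') :=
  (finCongr h).permCongr π

@[simp] lemma permCast_refl {k : ℕ} (π : Equiv.Perm (Fin k)) : permCast rfl π = π := by
  ext a
  simp [permCast, Equiv.permCongr]

lemma permCast_cast_symm {k k' : ℕ} (h : k = k') (π : Equiv.Perm (Fin k')) :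
    permCast h (permCast h.symm π) = π := by
  subst h; simp

/-- `p'` dominates `p`: same order and the inversions of `p` are inversions of `p'`. -/
def Dom (p p' : Perms) : Prop :=
  ∃ h : p.1 = p'.1, InvLe (permCast h p.2) p'.2

lemma dom_refl (p : Perms) : Dom p p := ⟨rfl, by simp; exact fun i j _ h => h⟩

lemma dom_mk_mk {k : ℕ} {π π' : Equiv.Perm (Fin k)} :
    Dom ⟨k, π⟩ ⟨k, π'⟩ ↔ InvLe π π' := by
  constructor
  · rintro ⟨h, hle⟩
    have he : h = rfl := Subsingleton.elim _ _
    rw [he, permCast_refl] at hle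
    exact hle
  · intro h
    exact ⟨rfl, by rwa [permCast_refl]⟩

lemma invLe_permCast_symm {k k' : ℕ} (h : k = k') {π : Equiv.Perm (Fin k)}
    {ρ : Equiv.Perm (Fin k')} (hle : InvLe (permCast h π) ρ) :
    InvLe π (permCast h.symm ρ) := by
  subst h
  simpa using hle

lemma mk_eq_of_permCast {k : ℕ} {π' : Equiv.Perm (Fin k)} {p' : Perms} (h : k = p'.1)
    (hc : permCast h π' = p'.2) : (⟨k, π'⟩ : Perms) = p' := by
  obtain ⟨k', ρ⟩ := p'
  have h' : k = k' := h
  subst h'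
  rw [Sigma.mk.inj_iff]
  refine ⟨rfl, heq_of_eq ?_⟩
  have he : h = rfl := Subsingleton.elim _ _
  rw [he, permCast_refl] at hc
  exact hc

lemma permCast_symm_of_eq {k : ℕ} {π' : Equiv.Perm (Fin k)} {p' : Perms} (h : k = p'.1)
    (hp : p' = ⟨k, π'⟩) : permCast h.symm p'.2 = π' := by
  subst hp
  have he : h = rfl := Subsingleton.elim _ _
  rw [he]
  simp

lemma dom_weight {p p' : Perms} (hd : Dom p p') (hne : p ≠ p') :
    (invSet p.2).card < (invSet p'.2).card := by
  obtain ⟨k, π⟩ := p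
  obtain ⟨k', π'⟩ := p'
  obtain ⟨h, hle⟩ := hd
  have h' : k = k' := h
  subst h'
  have he : h = rfl := Subsingleton.elim _ _
  rw [he, permCast_refl] at hle
  exact invSet_card_lt hle (fun hpp => hne (congrArg (Sigma.mk k) hpp))

lemma subDens_mk_eq {p' : Perms} {k n : ℕ} (h : k = p'.1) (σ : Equiv.Perm (Fin n)) :
    dens (permCast h.symm p'.2) σ = dens p'.2 σ := by
  obtain ⟨k', ρ⟩ := p'
  have h' : k = k' := h
  subst h'
  have he : h = rfl := Subsingleton.elim _ _
  rw [he]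
  simp

end Aux3
section Aux4
open Finset

open Classical in
lemma key_identity {q r : ℕ} {τ : Fin r → Perms} (henum : EnumOf q r τ)
    (p : Perms) (hp2 : 2 ≤ p.1) (hpq : p.1 ≤ q) (hind : Perms.Indec p) (σp : Perms) :
    monDens p σp = ∑ j : Fin r, (if Dom p (τ j) then (1:ℝ) else 0) * subDens (τ j) σp := by
  classical
  obtain ⟨k, π⟩ := p
  have hLHS : monDens ⟨k, π⟩ σp
      = ∑ π' ∈ univ.filter (fun π' : Equiv.Perm (Fin k) => InvLe π π'), dens π' σp.2 := by
    rw [Finset.sum_filter]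
    exact densMon_eq_sum π σp.2
  have hRHS : ∑ j : Fin r, (if Dom ⟨k, π⟩ (τ j) then (1:ℝ) else 0) * subDens (τ j) σp
      = ∑ j ∈ univ.filter (fun j => Dom (⟨k, π⟩ : Perms) (τ j)), subDens (τ j) σp := by
    rw [Finset.sum_filter]
    refine Finset.sum_congr rfl (fun j _ => ?_)
    by_cases h : Dom (⟨k, π⟩ : Perms) (τ j) <;> simp [h]
  rw [hLHS, hRHS]
  -- set up the bijection
  have hmem : ∀ π' ∈ univ.filter (fun π' : Equiv.Perm (Fin k) => InvLe π π'),
      ∃ j : Fin r, τ j = ⟨k, π'⟩ := by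
    intro π' hπ'
    rw [mem_filter] at hπ'
    have : (⟨k, π'⟩ : Perms) ∈ Set.range τ :=
      (henum.2 ⟨k, π'⟩).2 ⟨hp2, hpq, indec_of_invLe hind hπ'.2⟩
    exact this
  choose imap himap using hmem
  have hdom : ∀ j ∈ univ.filter (fun j => Dom (⟨k, π⟩ : Perms) (τ j)),
      Dom (⟨k, π⟩ : Perms) (τ j) := fun j hj => (mem_filter.1 hj).2
  refine Finset.sum_bij' imap
    (fun j hj => permCast ((hdom j hj).choose).symm (τ j).2) ?_ ?_ ?_ ?_ ?_
  · intro π' hπ'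
    rw [mem_filter]
    refine ⟨mem_univ _, ?_⟩
    rw [himap π' hπ']
    exact dom_mk_mk.2 (mem_filter.1 hπ').2
  · intro j hj
    rw [mem_filter]
    exact ⟨mem_univ _, invLe_permCast_symm _ ((hdom j hj).choose_spec)⟩
  · intro π' hπ'
    exact permCast_symm_of_eq (congrArg Sigma.fst (himap π' hπ')).symm (himap π' hπ')
  · intro j hj
    apply henum.1
    rw [himap]
    exact mk_eq_of_permCast ((hdom j hj).choose) (permCast_cast_symm _ _)
  · intro π' hπ'
    rw [subDens, himap π' hπ']

end Aux4
/-- **Observation 3.** For every integer `q ≥ 2`, the set `T^q_mon` is the image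
of `T^q` under a non-singular (invertible) linear map `L : ℝ^r → ℝ^r`. -/
theorem TqMon_linear_image_of_Tq (q : ℕ) (hq : 2 ≤ q) (r : ℕ) (τ : Fin r → Perms)
    (henum : EnumOf q r τ) :
    ∃ L : EuclideanSpace ℝ (Fin r) ≃ₗ[ℝ] EuclideanSpace ℝ (Fin r),
      (fun v => L v) '' Tq τ = TqMon τ := by
  classical
  set M : Matrix (Fin r) (Fin r) ℝ :=
    fun i j => if Dom (τ i) (τ j) then (1:ℝ) else 0 with hM
  set w : Fin r → ℕ := fun j => (invSet (τ j).2).card with hw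
  set Lmap : (Fin r → ℝ) →ₗ[ℝ] (Fin r → ℝ) := Matrix.toLin' M with hLmap
  have hinj : Function.Injective Lmap := by
    rw [injective_iff_map_eq_zero]
    intro v hv
    by_contra hvne
    have hs : (Finset.univ.filter (fun j => v j ≠ 0)).Nonempty := by
      obtain ⟨j, hj⟩ := Function.ne_iff.1 hvne
      exact ⟨j, by simpa using hj⟩
    obtain ⟨i, hi, hmax⟩ := Finset.exists_max_image _ w hs
    have hvi : v i ≠ 0 := (Finset.mem_filter.1 hi).2
    have h0 : (Matrix.toLin' M v) i = 0 := by rw [hv]; rfl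
    rw [Matrix.toLin'_apply] at h0
    have hsum : M.mulVec v i = ∑ j : Fin r, M i j * v j := rfl
    rw [hsum] at h0
    have hsingle : ∑ j : Fin r, M i j * v j = M i i * v i := by
      refine Finset.sum_eq_single_of_mem i (Finset.mem_univ i) (fun j _ hji => ?_)
      by_cases hd : Dom (τ i) (τ j)
      · have hvj : v j = 0 := by
          by_contra hvj
          have hjs : j ∈ Finset.univ.filter (fun j => v j ≠ 0) := by simp [hvj]
          have hle := hmax j hjs
          have hlt : w i < w j :=
            dom_weight hd (fun he => hji.symm (henum.1 he))
          omega
        rw [hvj, mul_zero]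
      · simp [hM, hd]
    rw [hsingle] at h0
    have : M i i = 1 := by simp [hM, dom_refl]
    rw [this, one_mul] at h0
    exact hvi h0
  have hbij : Function.Bijective Lmap :=
    ⟨hinj, LinearMap.injective_iff_surjective.1 hinj⟩
  set e : (Fin r → ℝ) ≃ₗ[ℝ] (Fin r → ℝ) := LinearEquiv.ofBijective Lmap hbij with he
  set E : EuclideanSpace ℝ (Fin r) ≃ₗ[ℝ] (Fin r → ℝ) :=
    WithLp.linearEquiv 2 ℝ (Fin r → ℝ) with hE
  refine ⟨E.trans (e.trans E.symm), ?_⟩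
  set L : EuclideanSpace ℝ (Fin r) ≃ₗ[ℝ] EuclideanSpace ℝ (Fin r) :=
    E.trans (e.trans E.symm) with hL
  have hLapp : ∀ (v : EuclideanSpace ℝ (Fin r)) (i : Fin r),
      L v i = ∑ j : Fin r, M i j * v j := by
    intro v i
    rfl
  have hcont : Continuous L := L.toLinearMap.continuous_of_finiteDimensional
  have hcont' : Continuous L.symm := L.symm.toLinearMap.continuous_of_finiteDimensional
  -- the pointwise identity, in vector form
  have hvec : ∀ σp : Perms,
      (WithLp.toLp 2 (fun i => monDens (τ i) σp) : EuclideanSpace ℝ (Fin r))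
        = L (WithLp.toLp 2 (fun i => subDens (τ i) σp) : EuclideanSpace ℝ (Fin r)) := by
    intro σp
    ext i
    rw [hLapp]
    simp only [PiLp.toLp_apply]
    have hmemi := (henum.2 (τ i)).1 ⟨i, rfl⟩
    exact key_identity henum (τ i) hmemi.1 hmemi.2.1 hmemi.2.2 σp
  ext u
  constructor
  · rintro ⟨v, ⟨σs, hord, hconv⟩, rfl⟩
    refine ⟨σs, hord, ?_⟩
    have : Filter.Tendsto (fun n =>
        L (WithLp.toLp 2 (fun i => subDens (τ i) (σs n)) : EuclideanSpace ℝ (Fin r)))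
        Filter.atTop (nhds (L v)) := (hcont.tendsto v).comp hconv
    simpa only [← hvec] using this
  · rintro ⟨σs, hord, hconv⟩
    refine ⟨L.symm u, ⟨σs, hord, ?_⟩, by simp⟩
    have : Filter.Tendsto (fun n =>
        L.symm (WithLp.toLp 2 (fun i => monDens (τ i) (σs n)) : EuclideanSpace ℝ (Fin r)))
        Filter.atTop (nhds (L.symm u)) := (hcont'.tendsto u).comp hconv
    have heq : ∀ n, L.symm (WithLp.toLp 2 (fun i => monDens (τ i) (σs n)) : EuclideanSpace ℝ (Fin r))
        = (WithLp.toLp 2 (fun i => subDens (τ i) (σs n)) : EuclideanSpace ℝ (Fin r)) := by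
      intro n
      rw [hvec (σs n)]
      exact L.symm_apply_apply _
    simpa only [heq] using this
end

section
/- A bounded permutation parameter f is testable if and only if it is finitely approximable. -/
open Filter Topology

/-- A permutation parameter `f : 𝔖 → ℝ` is finitely forcible if there is a finite
family `A` of permutations such that for every `ε > 0` there are `n₀` and `δ > 0`
such that any two permutations of order at least `n₀` whose densities of members
of `A` differ by less than `δ` have `f`-values within `ε`. -/
def FinitelyForcible (f : Perms → ℝ) : Prop :=
  ∃ A : Finset Perms, ∀ ε : ℝ, 0 < ε → ∃ n₀ : ℕ, ∃ δ : ℝ, 0 < δ ∧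
    ∀ σ π : Perms, n₀ ≤ σ.1 → n₀ ≤ π.1 →
      (∀ τ ∈ A, |subDens τ σ - subDens τ π| < δ) → |f σ - f π| < ε

/-- A permutation parameter `f : 𝔖 → ℝ` is finitely approximable if for every
`ε > 0` there are `δ > 0`, `n₀` and a finite family `A` of permutations such that
any two permutations of order at least `n₀` whose densities of members of `A`
differ by less than `δ` have `f`-values within `ε`. -/
def FinitelyApproximable (f : Perms → ℝ) : Prop :=
  ∀ ε : ℝ, 0 < ε → ∃ δ : ℝ, 0 < δ ∧ ∃ n₀ : ℕ, ∃ A : Finset Perms,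
    ∀ σ π : Perms, n₀ ≤ σ.1 → n₀ ≤ π.1 →
      (∀ τ ∈ A, |subDens τ σ - subDens τ π| < δ) → |f σ - f π| < ε

open scoped Classical

/-- A permutation parameter `f` is testable if for every `ε > 0` there are `n₀`
and an estimator `f̃ : S_{n₀} → ℝ` such that for every permutation `σ` of order at
least `n₀`, a uniformly random `n₀`-point subpermutation `π` of `σ` satisfies
`|f(σ) − f̃(π)| < ε` with probability at least `1 − ε`.  (The probability that the
random subpermutation equals `π` is exactly the density `t(π,σ)`.) -/
def Testable (f : Perms → ℝ) : Prop :=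
  ∀ ε : ℝ, 0 < ε → ∃ n₀ : ℕ, ∃ ft : Equiv.Perm (Fin n₀) → ℝ,
    ∀ σ : Perms, n₀ ≤ σ.1 →
      1 - ε ≤ ∑ π : Equiv.Perm (Fin n₀),
        (if |f σ - ft π| < ε then subDens ⟨n₀, π⟩ σ else 0)

namespace HKMS
open Finset

variable {n m k : ℕ}

/-- the image equivalence -/
def imgEquiv (σ : Equiv.Perm (Fin n)) (Y : Finset (Fin n)) :
    {x // x ∈ Y} ≃ {x // x ∈ Y.image σ} where
  toFun x := ⟨σ x, Finset.mem_image_of_mem σ x.2⟩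
  invFun y := ⟨σ.symm y, by
    obtain ⟨a, ha, hay⟩ := Finset.mem_image.mp y.2
    simpa [← hay] using ha⟩
  left_inv x := by simp
  right_inv y := by simp

lemma card_image_perm (σ : Equiv.Perm (Fin n)) {Y : Finset (Fin n)} (h : Y.card = m) :
    (Y.image σ).card = m := by
  rw [Finset.card_image_of_injective _ σ.injective]; exact h

/-- pattern of the subset `Y` in `σ` -/
noncomputable def patt (σ : Equiv.Perm (Fin n)) (Y : Finset (Fin n)) (h : Y.card = m) :
    Equiv.Perm (Fin m) :=
  ((Y.orderIsoOfFin h).toEquiv.trans (imgEquiv σ Y)).trans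
    ((Y.image σ).orderIsoOfFin (card_image_perm σ h)).symm.toEquiv

lemma patt_spec (σ : Equiv.Perm (Fin n)) (Y : Finset (Fin n)) (h : Y.card = m) (i j : Fin m) :
    patt σ Y h i < patt σ Y h j ↔ σ (Y.orderEmbOfFin h i) < σ (Y.orderEmbOfFin h j) := by
  simp only [patt, Equiv.trans_apply, RelIso.coe_fn_toEquiv]
  rw [OrderIso.lt_iff_lt]
  simp [imgEquiv, Subtype.mk_lt_mk, ← Finset.coe_orderIsoOfFin_apply]

lemma perm_eq_of_lt_iff {p q : Equiv.Perm (Fin k)} (h : ∀ i j, p i < p j ↔ q i < q j) :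
    p = q := by
  have hmono : StrictMono fun i => q (p.symm i) := by
    intro x y hxy
    have := (h (p.symm x) (p.symm y)).mp (by simpa using hxy)
    simpa using this
  have huniv : (Finset.univ : Finset (Fin k)).card = k := by simp
  have h1 : (fun i => q (p.symm i)) = (Finset.univ : Finset (Fin k)).orderEmbOfFin huniv :=
    Finset.orderEmbOfFin_unique huniv (fun x => Finset.mem_univ _) hmono
  have h2 : (id : Fin k → Fin k) = (Finset.univ : Finset (Fin k)).orderEmbOfFin huniv :=
    Finset.orderEmbOfFin_unique huniv (fun x => Finset.mem_univ _) strictMono_id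
  have h3 : ∀ i, q (p.symm i) = i := by
    intro i
    have := congrFun (h1.trans h2.symm) i
    simpa using this
  apply Equiv.ext
  intro i
  have := h3 (p i)
  simpa using this.symm

lemma pattC (σ : Equiv.Perm (Fin n)) (Y : Finset (Fin n)) (h : Y.card = m)
    (π : Equiv.Perm (Fin m)) :
    patt σ Y h = π ↔ IsOcc π σ (Y.orderEmbOfFin h) := by
  constructor
  · rintro rfl
    exact ⟨(Y.orderEmbOfFin h).strictMono, fun i j => (patt_spec σ Y h i j)⟩
  · rintro ⟨-, hiff⟩
    refine perm_eq_of_lt_iff (fun i j => ?_)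
    rw [patt_spec σ Y h i j, ← hiff]

/-- total version of `patt` -/
noncomputable def pattF (σ : Equiv.Perm (Fin n)) (m : ℕ) (Y : Finset (Fin n)) :
    Equiv.Perm (Fin m) :=
  if h : Y.card = m then patt σ Y h else 1

lemma pattF_eq (σ : Equiv.Perm (Fin n)) {Y : Finset (Fin n)} (h : Y.card = m) :
    pattF σ m Y = patt σ Y h := dif_pos h

/-- The set of `m`-subsets of `Fin n` whose pattern is `π`. -/
noncomputable def pattFiber (π : Equiv.Perm (Fin m)) (σ : Equiv.Perm (Fin n)) :
    Finset (Finset (Fin n)) :=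
  (Finset.powersetCard m Finset.univ).filter (fun Y => pattF σ m Y = π)

noncomputable def occ_equiv (π : Equiv.Perm (Fin m)) (σ : Equiv.Perm (Fin n)) :
    {f : Fin m → Fin n // IsOcc π σ f} ≃ {Y // Y ∈ pattFiber π σ} where
  toFun f := ⟨Finset.image f.1 Finset.univ, by
    have hcard : (Finset.image f.1 Finset.univ).card = m := by
      rw [Finset.card_image_of_injective _ f.2.1.injective]; simp
    have hemb : f.1 = (Finset.image f.1 Finset.univ).orderEmbOfFin hcard :=
      Finset.orderEmbOfFin_unique hcard (fun x => Finset.mem_image_of_mem _ (Finset.mem_univ x))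
        f.2.1
    refine Finset.mem_filter.mpr ⟨Finset.mem_powersetCard_univ.mpr hcard, ?_⟩
    rw [pattF_eq σ hcard, pattC]
    rw [← hemb]
    exact f.2⟩
  invFun Y := ⟨Y.1.orderEmbOfFin
      (Finset.mem_powersetCard_univ.mp (Finset.mem_filter.mp Y.2).1), by
    have hY := Finset.mem_filter.mp Y.2
    have hcard := Finset.mem_powersetCard_univ.mp hY.1
    rw [← pattC σ Y.1 hcard π, ← pattF_eq σ hcard]
    exact hY.2⟩
  left_inv f := by
    apply Subtype.ext
    have hcard : (Finset.image f.1 Finset.univ).card = m := by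
      rw [Finset.card_image_of_injective _ f.2.1.injective]; simp
    exact (Finset.orderEmbOfFin_unique hcard
      (fun x => Finset.mem_image_of_mem _ (Finset.mem_univ x)) f.2.1).symm
  right_inv Y := by
    apply Subtype.ext
    have hY := Finset.mem_filter.mp Y.2
    have hcard := Finset.mem_powersetCard_univ.mp hY.1
    have := Finset.range_orderEmbOfFin Y.1 hcard
    ext a
    simp only [Finset.mem_image, Finset.mem_univ, true_and]
    constructor
    · rintro ⟨i, rfl⟩; exact Finset.orderEmbOfFin_mem Y.1 hcard i
    · intro ha
      have h2 : a ∈ Set.range (Y.1.orderEmbOfFin hcard) := by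
        rw [this]; exact ha
      exact h2

lemma lam_eq_card (π : Equiv.Perm (Fin m)) (σ : Equiv.Perm (Fin n)) :
    lam π σ = (pattFiber π σ).card := by
  rw [lam, Nat.card_congr (occ_equiv π σ), Nat.card_eq_fintype_card, Fintype.card_coe]

lemma lam_le (π : Equiv.Perm (Fin m)) (σ : Equiv.Perm (Fin n)) :
    lam π σ ≤ n.choose m := by
  rw [lam_eq_card]
  calc (pattFiber π σ).card ≤ (Finset.powersetCard m (Finset.univ : Finset (Fin n))).card :=
        Finset.card_filter_le _ _
    _ = n.choose m := by rw [Finset.card_powersetCard]; simp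

/-- Identity 1: the total number of occurrences of all patterns. -/
lemma sum_lam (σ : Equiv.Perm (Fin n)) :
    ∑ π : Equiv.Perm (Fin m), lam π σ = n.choose m := by
  have h := Finset.card_eq_sum_card_fiberwise
    (f := pattF σ m) (s := Finset.powersetCard m (Finset.univ : Finset (Fin n)))
    (t := Finset.univ) (fun Y _ => Finset.mem_univ _)
  rw [Finset.card_powersetCard] at h
  simp only [Finset.card_univ, Fintype.card_fin] at h
  rw [h]
  exact Finset.sum_congr rfl fun π _ => lam_eq_card π σ

/-- counting extensions: the number of `m`-subsets containing a fixed `s`-subset. -/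
lemma count_ext {s : ℕ} (Z : Finset (Fin n)) (hZ : Z.card = s) (hsm : s ≤ m) :
    ((Finset.powersetCard m (Finset.univ : Finset (Fin n))).filter
      (fun Y => Z ⊆ Y)).card = (n - s).choose (m - s) := by
  have hc : (Finset.powersetCard (m - s) Zᶜ).card = (n - s).choose (m - s) := by
    rw [Finset.card_powersetCard, Finset.card_compl, hZ]
    simp
  rw [← hc]
  apply Finset.card_bij' (fun Y _ => Y \ Z) (fun W _ => W ∪ Z)
  · intro Y hY
    obtain ⟨hY1, hY2⟩ := Finset.mem_filter.mp hY
    have hYc := Finset.mem_powersetCard_univ.mp hY1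
    refine Finset.mem_powersetCard.mpr ⟨?_, ?_⟩
    · intro x hx
      obtain ⟨hx1, hx2⟩ := Finset.mem_sdiff.mp hx
      exact Finset.mem_compl.mpr hx2
    · rw [Finset.card_sdiff_of_subset hY2, hYc, hZ]
  · intro W hW
    obtain ⟨hW1, hW2⟩ := Finset.mem_powersetCard.mp hW
    have hdisj : Disjoint W Z := by
      rw [Finset.disjoint_left]
      intro a haW haZ
      exact (Finset.mem_compl.mp (hW1 haW)) haZ
    refine Finset.mem_filter.mpr ⟨Finset.mem_powersetCard_univ.mpr ?_, Finset.subset_union_right⟩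
    rw [Finset.card_union_of_disjoint hdisj, hW2, hZ]
    omega
  · intro Y hY
    exact Finset.sdiff_union_of_subset (Finset.mem_filter.mp hY).2
  · intro W hW
    obtain ⟨hW1, hW2⟩ := Finset.mem_powersetCard.mp hW
    have hdisj : Disjoint W Z := by
      rw [Finset.disjoint_left]
      intro a haW haZ
      exact (Finset.mem_compl.mp (hW1 haW)) haZ
    exact Finset.union_sdiff_cancel_right hdisj

lemma occ_comp_iff (τ : Equiv.Perm (Fin k)) (σ : Equiv.Perm (Fin n)) (Y : Finset (Fin n))
    (hY : Y.card = m) (u : Fin k → Fin m) :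
    IsOcc τ (patt σ Y hY) u ↔ IsOcc τ σ (fun i => Y.orderEmbOfFin hY (u i)) := by
  have hlt : ∀ a b : Fin m, Y.orderEmbOfFin hY a < Y.orderEmbOfFin hY b ↔ a < b :=
    fun a b => (Y.orderEmbOfFin hY).lt_iff_lt
  constructor
  · rintro ⟨hu, hiff⟩
    refine ⟨fun a b hab => (hlt _ _).mpr (hu hab), fun i j => ?_⟩
    rw [hiff i j, patt_spec]
  · rintro ⟨hu, hiff⟩
    refine ⟨fun a b hab => ?_, fun i j => ?_⟩
    · have := hu hab
      exact (hlt _ _).mp this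
    · rw [hiff i j, patt_spec]

lemma image_card_eq {W : Finset (Fin m)} (hW : W.card = k) (Y : Finset (Fin n))
    (hY : Y.card = m) : (W.image ⇑(Y.orderEmbOfFin hY)).card = k := by
  rw [Finset.card_image_of_injective _ (Y.orderEmbOfFin hY).injective]; exact hW

lemma emb_image_orderEmbOfFin {W : Finset (Fin m)} (hW : W.card = k) (Y : Finset (Fin n))
    (hY : Y.card = m) :
    ((W.image ⇑(Y.orderEmbOfFin hY)).orderEmbOfFin (image_card_eq hW Y hY) : Fin k → Fin n)
      = fun i => Y.orderEmbOfFin hY (W.orderEmbOfFin hW i) := by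
  refine (Finset.orderEmbOfFin_unique (image_card_eq hW Y hY) (fun x => ?_) ?_).symm
  · exact Finset.mem_image_of_mem _ (Finset.orderEmbOfFin_mem W hW x)
  · exact (Y.orderEmbOfFin hY).strictMono.comp (W.orderEmbOfFin hW).strictMono

lemma pattF_image_iff (τ : Equiv.Perm (Fin k)) (σ : Equiv.Perm (Fin n)) (Y : Finset (Fin n))
    (hY : Y.card = m) {W : Finset (Fin m)} (hW : W.card = k) :
    pattF σ k (W.image ⇑(Y.orderEmbOfFin hY)) = τ ↔ pattF (patt σ Y hY) k W = τ := by
  rw [pattF_eq σ (image_card_eq hW Y hY), pattF_eq (patt σ Y hY) hW, pattC, pattC,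
    emb_image_orderEmbOfFin hW Y hY, occ_comp_iff]

lemma lam_patt (τ : Equiv.Perm (Fin k)) (σ : Equiv.Perm (Fin n)) (Y : Finset (Fin n))
    (hY : Y.card = m) :
    lam τ (patt σ Y hY) =
      ((Finset.powersetCard k (Finset.univ : Finset (Fin n))).filter
        (fun Z => Z ⊆ Y ∧ pattF σ k Z = τ)).card := by
  rw [lam_eq_card]
  apply Finset.card_bij (fun W _ => W.image ⇑(Y.orderEmbOfFin hY))
  · intro W hWmem
    obtain ⟨hW1, hW2⟩ := Finset.mem_filter.mp hWmem
    have hW := Finset.mem_powersetCard_univ.mp hW1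
    refine Finset.mem_filter.mpr ⟨Finset.mem_powersetCard_univ.mpr (image_card_eq hW Y hY), ?_, ?_⟩
    · intro x hx
      obtain ⟨w, hw, rfl⟩ := Finset.mem_image.mp hx
      exact Finset.orderEmbOfFin_mem Y hY w
    · exact (pattF_image_iff τ σ Y hY hW).mpr hW2
  · intro W₁ h₁ W₂ h₂ him
    exact Finset.image_injective (Y.orderEmbOfFin hY).injective him
  · intro Z hZmem
    obtain ⟨hZ1, hZY, hZp⟩ := Finset.mem_filter.mp hZmem
    have hZc := Finset.mem_powersetCard_univ.mp hZ1
    set a := Y.orderIsoOfFin hY with ha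
    refine ⟨Z.attach.image (fun x => a.symm ⟨x.1, hZY x.2⟩), ?_, ?_⟩
    · -- membership in pattFiber
      have hinj : Function.Injective (fun x : {x // x ∈ Z} => a.symm ⟨x.1, hZY x.2⟩) := by
        intro x y hxy
        have h2 := a.symm.injective hxy
        have h3 : x.1 = y.1 := by
          have := congrArg (Subtype.val : {z // z ∈ Y} → Fin n) h2
          simpa using this
        exact Subtype.ext h3
      have hcard : (Z.attach.image (fun x => a.symm ⟨x.1, hZY x.2⟩)).card = k := by
        rw [Finset.card_image_of_injective _ hinj, Finset.card_attach, hZc]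
      have himg : (Z.attach.image (fun x => a.symm ⟨x.1, hZY x.2⟩)).image
          ⇑(Y.orderEmbOfFin hY) = Z := by
        ext b
        simp only [Finset.image_image, Finset.mem_image, Finset.mem_attach, true_and,
          Function.comp_apply]
        constructor
        · rintro ⟨x, rfl⟩
          have : Y.orderEmbOfFin hY (a.symm ⟨x.1, hZY x.2⟩)
              = ((a (a.symm ⟨x.1, hZY x.2⟩) : {y // y ∈ Y}) : Fin n) := by
            rw [← Finset.coe_orderIsoOfFin_apply]
          rw [this, a.apply_symm_apply]
          exact x.2
        · intro hb
          refine ⟨⟨b, hb⟩, ?_⟩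
          have : Y.orderEmbOfFin hY (a.symm ⟨b, hZY hb⟩)
              = ((a (a.symm ⟨b, hZY hb⟩) : {y // y ∈ Y}) : Fin n) := by
            rw [← Finset.coe_orderIsoOfFin_apply]
          rw [this, a.apply_symm_apply]
      refine Finset.mem_filter.mpr ⟨Finset.mem_powersetCard_univ.mpr hcard, ?_⟩
      rw [← pattF_image_iff τ σ Y hY hcard, himg]
      exact hZp
    · -- image equals Z
      ext b
      simp only [Finset.image_image, Finset.mem_image, Finset.mem_attach, true_and,
        Function.comp_apply]
      constructor
      · rintro ⟨x, rfl⟩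
        have : Y.orderEmbOfFin hY (a.symm ⟨x.1, hZY x.2⟩)
            = ((a (a.symm ⟨x.1, hZY x.2⟩) : {y // y ∈ Y}) : Fin n) := by
          rw [← Finset.coe_orderIsoOfFin_apply]
        rw [this, a.apply_symm_apply]
        exact x.2
      · intro hb
        refine ⟨⟨b, hb⟩, ?_⟩
        have : Y.orderEmbOfFin hY (a.symm ⟨b, hZY hb⟩)
            = ((a (a.symm ⟨b, hZY hb⟩) : {y // y ∈ Y}) : Fin n) := by
          rw [← Finset.coe_orderIsoOfFin_apply]
        rw [this, a.apply_symm_apply]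

/-- Identity 2. -/
lemma sum_lam_mul (τ : Equiv.Perm (Fin k)) (σ : Equiv.Perm (Fin n)) (hkm : k ≤ m) :
    ∑ π : Equiv.Perm (Fin m), lam τ π * lam π σ = lam τ σ * (n - k).choose (m - k) := by
  have step1 : ∑ π : Equiv.Perm (Fin m), lam τ π * lam π σ
      = ∑ Y ∈ Finset.powersetCard m (Finset.univ : Finset (Fin n)), lam τ (pattF σ m Y) := by
    rw [← Finset.sum_fiberwise_of_maps_to (g := pattF σ m)
      (fun Y _ => Finset.mem_univ _) (fun Y => lam τ (pattF σ m Y))]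
    refine Finset.sum_congr rfl fun π _ => ?_
    have hconst : ∀ Y ∈ (Finset.powersetCard m (Finset.univ : Finset (Fin n))).filter
        (fun Y => pattF σ m Y = π), lam τ (pattF σ m Y) = lam τ π := fun Y hY => by
      rw [(Finset.mem_filter.mp hY).2]
    rw [Finset.sum_congr rfl hconst, Finset.sum_const, smul_eq_mul, lam_eq_card π σ, pattFiber,
      mul_comm]
  have step2 : ∀ Y ∈ Finset.powersetCard m (Finset.univ : Finset (Fin n)),
      lam τ (pattF σ m Y) = ((Finset.powersetCard k (Finset.univ : Finset (Fin n))).filter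
        (fun Z => Z ⊆ Y ∧ pattF σ k Z = τ)).card := fun Y hY => by
    have hYc := Finset.mem_powersetCard_univ.mp hY
    rw [pattF_eq σ hYc, lam_patt]
  rw [step1, Finset.sum_congr rfl step2]
  simp only [Finset.card_filter]
  rw [Finset.sum_comm]
  have inner : ∀ Z ∈ Finset.powersetCard k (Finset.univ : Finset (Fin n)),
      (∑ Y ∈ Finset.powersetCard m (Finset.univ : Finset (Fin n)),
        if Z ⊆ Y ∧ pattF σ k Z = τ then 1 else 0)
      = if pattF σ k Z = τ then (n - k).choose (m - k) else 0 := by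
    intro Z hZ
    have hZc := Finset.mem_powersetCard_univ.mp hZ
    by_cases hp : pattF σ k Z = τ
    · simp only [hp, and_true, if_true]
      rw [← Finset.card_filter]
      exact count_ext Z hZc hkm
    · simp [hp]
  rw [Finset.sum_congr rfl inner, ← Finset.sum_filter, Finset.sum_const, smul_eq_mul,
    lam_eq_card τ σ, pattFiber]

/-- The set of pairs of disjoint `k`-subsets both with pattern `τ`. -/
noncomputable def pairFiber (τ : Equiv.Perm (Fin k)) (σ : Equiv.Perm (Fin n)) :
    Finset (Finset (Fin n) × Finset (Fin n)) :=
  ((Finset.powersetCard k (Finset.univ : Finset (Fin n))) ×ˢ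
    (Finset.powersetCard k (Finset.univ : Finset (Fin n)))).filter
    (fun p => Disjoint p.1 p.2 ∧ pattF σ k p.1 = τ ∧ pattF σ k p.2 = τ)

noncomputable def lam2 (τ : Equiv.Perm (Fin k)) (σ : Equiv.Perm (Fin n)) : ℕ :=
  (pairFiber τ σ).card

lemma lam2_le (τ : Equiv.Perm (Fin k)) (σ : Equiv.Perm (Fin n)) :
    lam2 τ σ ≤ lam τ σ * lam τ σ := by
  rw [lam2, lam_eq_card, ← Finset.card_product]
  apply Finset.card_le_card
  intro p hp
  obtain ⟨hmem, hd, h1, h2⟩ := Finset.mem_filter.mp hp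
  obtain ⟨hm1, hm2⟩ := Finset.mem_product.mp hmem
  exact Finset.mem_product.mpr ⟨Finset.mem_filter.mpr ⟨hm1, h1⟩, Finset.mem_filter.mpr ⟨hm2, h2⟩⟩

lemma sq_le_lam2_add (τ : Equiv.Perm (Fin k)) (σ : Equiv.Perm (Fin n)) :
    lam τ σ * lam τ σ ≤ lam2 τ σ + lam τ σ * (k * (n - 1).choose (k - 1)) := by
  set F := pattFiber τ σ with hF
  have hFP : F ⊆ Finset.powersetCard k (Finset.univ : Finset (Fin n)) :=
    Finset.filter_subset _ _
  rw [lam_eq_card, ← hF, ← Finset.card_product]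
  rw [← Finset.card_filter_add_card_filter_not
    (p := fun p : Finset (Fin n) × Finset (Fin n) => Disjoint p.1 p.2) (s := F ×ˢ F)]
  have h1 : ((F ×ˢ F).filter (fun p => Disjoint p.1 p.2)).card ≤ lam2 τ σ := by
    apply Finset.card_le_card
    intro p hp
    obtain ⟨hmem, hd⟩ := Finset.mem_filter.mp hp
    obtain ⟨hm1, hm2⟩ := Finset.mem_product.mp hmem
    obtain ⟨hp1, ht1⟩ := Finset.mem_filter.mp hm1
    obtain ⟨hp2, ht2⟩ := Finset.mem_filter.mp hm2
    exact Finset.mem_filter.mpr ⟨Finset.mem_product.mpr ⟨hp1, hp2⟩, hd, ht1, ht2⟩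
  have h2 : ((F ×ˢ F).filter (fun p => ¬ Disjoint p.1 p.2)).card
      ≤ F.card * (k * (n - 1).choose (k - 1)) := by
    rw [Finset.card_filter, Finset.sum_product]
    have hbound : ∀ Z₁ ∈ F, (∑ Z₂ ∈ F, if ¬ Disjoint Z₁ Z₂ then 1 else 0)
        ≤ k * (n - 1).choose (k - 1) := by
      intro Z₁ hZ₁
      have hZ₁c := Finset.mem_powersetCard_univ.mp (hFP hZ₁)
      rw [← Finset.card_filter]
      calc (F.filter (fun Z₂ => ¬ Disjoint Z₁ Z₂)).card
          ≤ (Z₁.biUnion (fun x => (Finset.powersetCard k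
              (Finset.univ : Finset (Fin n))).filter (fun Z₂ => x ∈ Z₂))).card := by
            apply Finset.card_le_card
            intro Z₂ hZ₂
            obtain ⟨hZ₂F, hnd⟩ := Finset.mem_filter.mp hZ₂
            obtain ⟨x, hx1, hx2⟩ := Finset.not_disjoint_iff.mp hnd
            exact Finset.mem_biUnion.mpr ⟨x, hx1,
              Finset.mem_filter.mpr ⟨hFP hZ₂F, hx2⟩⟩
        _ ≤ ∑ x ∈ Z₁, ((Finset.powersetCard k
              (Finset.univ : Finset (Fin n))).filter (fun Z₂ => x ∈ Z₂)).card :=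
            Finset.card_biUnion_le
        _ ≤ ∑ _x ∈ Z₁, (n - 1).choose (k - 1) := by
            apply Finset.sum_le_sum
            intro x hx
            rcases Nat.eq_zero_or_pos k with hk | hk
            · subst hk
              have hemp : (Finset.powersetCard 0 (Finset.univ : Finset (Fin n))).filter
                  (fun Z₂ => x ∈ Z₂) = ∅ := by
                ext Z₂
                simp only [Finset.mem_filter, Finset.mem_powersetCard_univ,
                  Finset.notMem_empty, iff_false, not_and]
                intro hc
                rw [Finset.card_eq_zero.mp hc]
                simp
              rw [hemp]
              simp
            · have heq : (Finset.powersetCard k (Finset.univ : Finset (Fin n))).filter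
                  (fun Z₂ => x ∈ Z₂)
                  = (Finset.powersetCard k (Finset.univ : Finset (Fin n))).filter
                  (fun Z₂ => {x} ⊆ Z₂) := by
                apply Finset.filter_congr
                intro Z₂ _
                simp [Finset.singleton_subset_iff]
              rw [heq, count_ext ({x} : Finset (Fin n)) (Finset.card_singleton x) hk]
        _ = k * (n - 1).choose (k - 1) := by
            rw [Finset.sum_const, smul_eq_mul, hZ₁c]
    calc ∑ Z₁ ∈ F, ∑ Z₂ ∈ F, (if ¬ Disjoint Z₁ Z₂ then 1 else 0)
        ≤ ∑ _Z₁ ∈ F, k * (n - 1).choose (k - 1) := Finset.sum_le_sum hbound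
      _ = F.card * (k * (n - 1).choose (k - 1)) := by
          rw [Finset.sum_const, smul_eq_mul]
  have h3 : lam τ σ = F.card := lam_eq_card τ σ
  omega

lemma exists_image_eq (σ : Equiv.Perm (Fin n)) (Y : Finset (Fin n)) (hY : Y.card = m)
    {Z : Finset (Fin n)} (hZY : Z ⊆ Y) :
    ∃ W : Finset (Fin m), W.image ⇑(Y.orderEmbOfFin hY) = Z := by
  set a := Y.orderIsoOfFin hY with ha
  refine ⟨Z.attach.image (fun x => a.symm ⟨x.1, hZY x.2⟩), ?_⟩
  ext b
  simp only [Finset.image_image, Finset.mem_image, Finset.mem_attach, true_and,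
    Function.comp_apply]
  constructor
  · rintro ⟨x, rfl⟩
    have : Y.orderEmbOfFin hY (a.symm ⟨x.1, hZY x.2⟩)
        = ((a (a.symm ⟨x.1, hZY x.2⟩) : {y // y ∈ Y}) : Fin n) := by
      rw [← Finset.coe_orderIsoOfFin_apply]
    rw [this, a.apply_symm_apply]
    exact x.2
  · intro hb
    refine ⟨⟨b, hb⟩, ?_⟩
    have : Y.orderEmbOfFin hY (a.symm ⟨b, hZY hb⟩)
        = ((a (a.symm ⟨b, hZY hb⟩) : {y // y ∈ Y}) : Fin n) := by
      rw [← Finset.coe_orderIsoOfFin_apply]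
    rw [this, a.apply_symm_apply]

lemma lam2_patt (τ : Equiv.Perm (Fin k)) (σ : Equiv.Perm (Fin n)) (Y : Finset (Fin n))
    (hY : Y.card = m) :
    lam2 τ (patt σ Y hY) =
      (((Finset.powersetCard k (Finset.univ : Finset (Fin n))) ×ˢ
        (Finset.powersetCard k (Finset.univ : Finset (Fin n)))).filter
        (fun p => (Disjoint p.1 p.2 ∧ pattF σ k p.1 = τ ∧ pattF σ k p.2 = τ)
          ∧ p.1 ∪ p.2 ⊆ Y)).card := by
  rw [lam2, pairFiber]
  set e := Y.orderEmbOfFin hY with he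
  apply Finset.card_bij (fun p _ => (p.1.image ⇑e, p.2.image ⇑e))
  · rintro ⟨W₁, W₂⟩ hp
    obtain ⟨hmem, hd, h1, h2⟩ := Finset.mem_filter.mp hp
    obtain ⟨hm1, hm2⟩ := Finset.mem_product.mp hmem
    have hc1 := Finset.mem_powersetCard_univ.mp hm1
    have hc2 := Finset.mem_powersetCard_univ.mp hm2
    have hsub : ∀ W : Finset (Fin m), W.image ⇑e ⊆ Y := by
      intro W x hx
      obtain ⟨w, _, rfl⟩ := Finset.mem_image.mp hx
      exact Finset.orderEmbOfFin_mem Y hY w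
    refine Finset.mem_filter.mpr ⟨Finset.mem_product.mpr
      ⟨Finset.mem_powersetCard_univ.mpr (image_card_eq hc1 Y hY),
       Finset.mem_powersetCard_univ.mpr (image_card_eq hc2 Y hY)⟩, ⟨?_, ?_, ?_⟩, ?_⟩
    · exact (Finset.disjoint_image e.injective).mpr hd
    · exact (pattF_image_iff τ σ Y hY hc1).mpr h1
    · exact (pattF_image_iff τ σ Y hY hc2).mpr h2
    · exact Finset.union_subset (hsub W₁) (hsub W₂)
  · rintro ⟨W₁, W₂⟩ h₁ ⟨V₁, V₂⟩ h₂ him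
    have h1 := congrArg Prod.fst him
    have h2 := congrArg Prod.snd him
    simp only at h1 h2
    exact Prod.ext (Finset.image_injective e.injective h1)
      (Finset.image_injective e.injective h2)
  · rintro ⟨Z₁, Z₂⟩ hZ
    obtain ⟨hmem, ⟨hd, h1, h2⟩, hsubY⟩ := Finset.mem_filter.mp hZ
    obtain ⟨hm1, hm2⟩ := Finset.mem_product.mp hmem
    have hc1 := Finset.mem_powersetCard_univ.mp hm1
    have hc2 := Finset.mem_powersetCard_univ.mp hm2
    have hZ₁Y : Z₁ ⊆ Y := (Finset.subset_union_left).trans hsubY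
    have hZ₂Y : Z₂ ⊆ Y := (Finset.subset_union_right).trans hsubY
    obtain ⟨W₁, hW₁⟩ := exists_image_eq σ Y hY hZ₁Y
    obtain ⟨W₂, hW₂⟩ := exists_image_eq σ Y hY hZ₂Y
    have hWc1 : W₁.card = k := by
      rw [← hc1, ← hW₁, Finset.card_image_of_injective _ e.injective]
    have hWc2 : W₂.card = k := by
      rw [← hc2, ← hW₂, Finset.card_image_of_injective _ e.injective]
    refine ⟨(W₁, W₂), Finset.mem_filter.mpr ⟨Finset.mem_product.mpr
      ⟨Finset.mem_powersetCard_univ.mpr hWc1, Finset.mem_powersetCard_univ.mpr hWc2⟩,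
      ?_, ?_, ?_⟩, by simp [he, hW₁, hW₂]⟩
    · apply (Finset.disjoint_image e.injective).mp
      rw [hW₁, hW₂]; exact hd
    · rw [← pattF_image_iff τ σ Y hY hWc1, hW₁]; exact h1
    · rw [← pattF_image_iff τ σ Y hY hWc2, hW₂]; exact h2

/-- Identity 3. -/
lemma sum_lam2_mul (τ : Equiv.Perm (Fin k)) (σ : Equiv.Perm (Fin n)) (hkm : 2 * k ≤ m) :
    ∑ π : Equiv.Perm (Fin m), lam2 τ π * lam π σ
      = lam2 τ σ * (n - 2 * k).choose (m - 2 * k) := by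
  have step1 : ∑ π : Equiv.Perm (Fin m), lam2 τ π * lam π σ
      = ∑ Y ∈ Finset.powersetCard m (Finset.univ : Finset (Fin n)), lam2 τ (pattF σ m Y) := by
    rw [← Finset.sum_fiberwise_of_maps_to (g := pattF σ m)
      (fun Y _ => Finset.mem_univ _) (fun Y => lam2 τ (pattF σ m Y))]
    refine Finset.sum_congr rfl fun π _ => ?_
    have hconst : ∀ Y ∈ (Finset.powersetCard m (Finset.univ : Finset (Fin n))).filter
        (fun Y => pattF σ m Y = π), lam2 τ (pattF σ m Y) = lam2 τ π := fun Y hY => by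
      rw [(Finset.mem_filter.mp hY).2]
    rw [Finset.sum_congr rfl hconst, Finset.sum_const, smul_eq_mul, lam_eq_card π σ, pattFiber,
      mul_comm]
  have step2 : ∀ Y ∈ Finset.powersetCard m (Finset.univ : Finset (Fin n)),
      lam2 τ (pattF σ m Y) = (((Finset.powersetCard k (Finset.univ : Finset (Fin n))) ×ˢ
        (Finset.powersetCard k (Finset.univ : Finset (Fin n)))).filter
        (fun p => (Disjoint p.1 p.2 ∧ pattF σ k p.1 = τ ∧ pattF σ k p.2 = τ)
          ∧ p.1 ∪ p.2 ⊆ Y)).card := fun Y hY => by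
    have hYc := Finset.mem_powersetCard_univ.mp hY
    rw [pattF_eq σ hYc, lam2_patt]
  rw [step1, Finset.sum_congr rfl step2]
  simp only [Finset.card_filter]
  rw [Finset.sum_comm]
  have inner : ∀ p ∈ ((Finset.powersetCard k (Finset.univ : Finset (Fin n))) ×ˢ
      (Finset.powersetCard k (Finset.univ : Finset (Fin n)))),
      (∑ Y ∈ Finset.powersetCard m (Finset.univ : Finset (Fin n)),
        if (Disjoint p.1 p.2 ∧ pattF σ k p.1 = τ ∧ pattF σ k p.2 = τ) ∧ p.1 ∪ p.2 ⊆ Y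
          then 1 else 0)
      = if Disjoint p.1 p.2 ∧ pattF σ k p.1 = τ ∧ pattF σ k p.2 = τ
          then (n - 2 * k).choose (m - 2 * k) else 0 := by
    intro p hp
    obtain ⟨hm1, hm2⟩ := Finset.mem_product.mp hp
    have hc1 := Finset.mem_powersetCard_univ.mp hm1
    have hc2 := Finset.mem_powersetCard_univ.mp hm2
    by_cases hcond : Disjoint p.1 p.2 ∧ pattF σ k p.1 = τ ∧ pattF σ k p.2 = τ
    · simp only [hcond, true_and, if_true]
      rw [← Finset.card_filter]
      have hcu : (p.1 ∪ p.2).card = 2 * k := by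
        rw [Finset.card_union_of_disjoint hcond.1, hc1, hc2]; omega
      exact count_ext (p.1 ∪ p.2) hcu hkm
    · simp [hcond]
  rw [Finset.sum_congr rfl inner, ← Finset.sum_filter, Finset.sum_const, smul_eq_mul]
  rfl

/-- The chain identity for binomial coefficients, derived by double counting. -/
lemma choose_chain (hkm : k ≤ m) (n : ℕ) :
    m.choose k * n.choose m = n.choose k * (n - k).choose (m - k) := by
  have hswap : ∑ τ : Equiv.Perm (Fin k), ∑ π : Equiv.Perm (Fin m),
      lam τ π * lam π (1 : Equiv.Perm (Fin n))
      = ∑ π : Equiv.Perm (Fin m), ∑ τ : Equiv.Perm (Fin k),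
        lam τ π * lam π (1 : Equiv.Perm (Fin n)) := Finset.sum_comm
  have hL : ∑ τ : Equiv.Perm (Fin k), ∑ π : Equiv.Perm (Fin m),
      lam τ π * lam π (1 : Equiv.Perm (Fin n))
      = n.choose k * (n - k).choose (m - k) := by
    rw [Finset.sum_congr rfl (fun τ _ => sum_lam_mul τ (1 : Equiv.Perm (Fin n)) hkm),
      ← Finset.sum_mul, sum_lam]
  have hR : ∑ π : Equiv.Perm (Fin m), ∑ τ : Equiv.Perm (Fin k),
      lam τ π * lam π (1 : Equiv.Perm (Fin n))
      = m.choose k * n.choose m := by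
    have hin : ∀ π : Equiv.Perm (Fin m), ∑ τ : Equiv.Perm (Fin k),
        lam τ π * lam π (1 : Equiv.Perm (Fin n)) = m.choose k * lam π (1 : Equiv.Perm (Fin n)) := by
      intro π
      rw [← Finset.sum_mul, sum_lam]
    rw [Finset.sum_congr rfl (fun π _ => hin π), ← Finset.mul_sum, sum_lam]
  rw [← hR, ← hswap, hL]

lemma term_ineq (hmn : m ≤ n) (i : ℕ) : (n - i) * (m - k - i) ≤ (m - i) * (n - k - i) := by
  rcases le_or_gt (m - k) i with h | h
  · have h0 : m - k - i = 0 := by omega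
    simp [h0]
  · have h1 : k + i < m := by omega
    have hik : i ≤ m - k := by omega
    have hik' : i ≤ n - k := by omega
    have him : i ≤ m := by omega
    have hin' : i ≤ n := by omega
    have hkm' : k ≤ m := by omega
    have hkn' : k ≤ n := by omega
    zify [hik, hik', him, hin', hkm', hkn']
    have hk0 : (0:ℤ) ≤ (k : ℤ) := Int.natCast_nonneg k
    have hnm : (m:ℤ) ≤ (n:ℤ) := by exact_mod_cast hmn
    nlinarith [mul_nonneg hk0 (sub_nonneg.mpr hnm)]

lemma choose_core (hmn : m ≤ n) :
    n.choose k * (m - k).choose k ≤ m.choose k * (n - k).choose k := by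
  have hd : n.descFactorial k * (m - k).descFactorial k
      ≤ m.descFactorial k * (n - k).descFactorial k := by
    rw [Nat.descFactorial_eq_prod_range, Nat.descFactorial_eq_prod_range,
      Nat.descFactorial_eq_prod_range, Nat.descFactorial_eq_prod_range,
      ← Finset.prod_mul_distrib, ← Finset.prod_mul_distrib]
    refine Finset.prod_le_prod' (fun i _ => term_ineq hmn i)
  rw [Nat.descFactorial_eq_factorial_mul_choose, Nat.descFactorial_eq_factorial_mul_choose,
    Nat.descFactorial_eq_factorial_mul_choose, Nat.descFactorial_eq_factorial_mul_choose] at hd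
  have hfac : 0 < k.factorial * k.factorial := Nat.mul_pos k.factorial_pos k.factorial_pos
  apply Nat.le_of_mul_le_mul_left _ hfac
  calc k.factorial * k.factorial * (n.choose k * (m - k).choose k)
      = k.factorial * n.choose k * (k.factorial * (m - k).choose k) := by ring
    _ ≤ k.factorial * m.choose k * (k.factorial * (n - k).choose k) := hd
    _ = k.factorial * k.factorial * (m.choose k * (n - k).choose k) := by ring

lemma chooseR (h2k : 2 * k ≤ m) (hmn : m ≤ n) :
    n.choose k * (n.choose k * (n - 2 * k).choose (m - 2 * k))
      ≤ m.choose k * (m.choose k * n.choose m) := by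
  have hkm : k ≤ m := by omega
  have hchain1 : m.choose k * n.choose m = n.choose k * (n - k).choose (m - k) :=
    choose_chain hkm n
  have hkk : k ≤ m - k := by omega
  have hkk2 : m - k ≤ n - k := by omega
  have hchain2 : (m - k).choose k * (n - k).choose (m - k)
      = (n - k).choose k * (n - k - k).choose (m - k - k) := choose_chain hkk (n - k)
  have e1 : n - k - k = n - 2 * k := by omega
  have e2 : m - k - k = m - 2 * k := by omega
  rw [e1, e2] at hchain2
  have core := choose_core (k := k) hmn
  have hpos : 0 < (m - k).choose k := Nat.choose_pos hkk
  have key : n.choose k * (n - 2 * k).choose (m - 2 * k)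
      ≤ m.choose k * (n - k).choose (m - k) := by
    apply Nat.le_of_mul_le_mul_left _ hpos
    calc (m - k).choose k * (n.choose k * (n - 2 * k).choose (m - 2 * k))
        = (n.choose k * (m - k).choose k) * (n - 2 * k).choose (m - 2 * k) := by ring
      _ ≤ (m.choose k * (n - k).choose k) * (n - 2 * k).choose (m - 2 * k) :=
          Nat.mul_le_mul core (le_refl _)
      _ = m.choose k * ((n - k).choose k * (n - 2 * k).choose (m - 2 * k)) := by ring
      _ = m.choose k * ((m - k).choose k * (n - k).choose (m - k)) := by rw [hchain2]
      _ = (m - k).choose k * (m.choose k * (n - k).choose (m - k)) := by ring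
  calc n.choose k * (n.choose k * (n - 2 * k).choose (m - 2 * k))
      ≤ n.choose k * (m.choose k * (n - k).choose (m - k)) :=
        Nat.mul_le_mul (le_refl _) key
    _ = m.choose k * (n.choose k * (n - k).choose (m - k)) := by ring
    _ = m.choose k * (m.choose k * n.choose m) := by rw [← hchain1]

lemma mul_choose_pred (hm : 1 ≤ m) (hk : 1 ≤ k) :
    m * (m - 1).choose (k - 1) = m.choose k * k := by
  have h := Nat.add_one_mul_choose_eq (m - 1) (k - 1)
  have e1 : m - 1 + 1 = m := by omega
  have e2 : k - 1 + 1 = k := by omega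
  rw [e1, e2] at h
  exact h

end HKMS

namespace HKMS

lemma dens_nonneg (π : Equiv.Perm (Fin m)) (σ : Equiv.Perm (Fin n)) : 0 ≤ dens π σ := by
  rw [dens]
  split_ifs with h
  · positivity
  · exact le_refl 0

lemma dens_le_one (π : Equiv.Perm (Fin m)) (σ : Equiv.Perm (Fin n)) : dens π σ ≤ 1 := by
  rw [dens]
  split_ifs with h
  · have hpos : (0:ℝ) < (n.choose m : ℝ) := by
      exact_mod_cast Nat.choose_pos h
    rw [div_le_one hpos]
    exact_mod_cast lam_le π σ
  · exact zero_le_one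

lemma sum_dens (σ : Equiv.Perm (Fin n)) (hmn : m ≤ n) :
    ∑ π : Equiv.Perm (Fin m), dens π σ = 1 := by
  have hpos : (0:ℝ) < (n.choose m : ℝ) := by exact_mod_cast Nat.choose_pos hmn
  have : ∑ π : Equiv.Perm (Fin m), dens π σ
      = (∑ π : Equiv.Perm (Fin m), (lam π σ : ℝ)) / (n.choose m : ℝ) := by
    rw [Finset.sum_div]
    exact Finset.sum_congr rfl fun π _ => by rw [dens, if_pos hmn]
  rw [this]
  rw [show ∑ π : Equiv.Perm (Fin m), (lam π σ : ℝ) = ((∑ π : Equiv.Perm (Fin m), lam π σ : ℕ) : ℝ)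
    by push_cast; rfl]
  rw [sum_lam]
  exact div_self hpos.ne'

/-- The sampling variance bound. -/
lemma var_le (τ : Equiv.Perm (Fin k)) (σ : Equiv.Perm (Fin n))
    (h2k : 2 * k ≤ m) (hm : 1 ≤ m) (hmn : m ≤ n) :
    ∑ π : Equiv.Perm (Fin m), (dens τ π - dens τ σ)^2 * dens π σ ≤ (k^2 : ℝ) / m := by
  have hkm : k ≤ m := by omega
  have hkn : k ≤ n := by omega
  have hmkn : m - k ≤ n - k := by omega
  set Cmk := ((m.choose k : ℕ) : ℝ) with hCmk
  set Cnm := ((n.choose m : ℕ) : ℝ) with hCnm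
  set Cnk := ((n.choose k : ℕ) : ℝ) with hCnk
  set Dk := (((n - k).choose (m - k) : ℕ) : ℝ) with hDk
  set D2 := (((n - 2 * k).choose (m - 2 * k) : ℕ) : ℝ) with hD2
  have hCmk0 : (0:ℝ) < Cmk := by rw [hCmk]; exact_mod_cast Nat.choose_pos hkm
  have hCnm0 : (0:ℝ) < Cnm := by rw [hCnm]; exact_mod_cast Nat.choose_pos hmn
  have hCnk0 : (0:ℝ) < Cnk := by rw [hCnk]; exact_mod_cast Nat.choose_pos hkn
  have hDk0 : (0:ℝ) < Dk := by rw [hDk]; exact_mod_cast Nat.choose_pos hmkn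
  have hm0 : (0:ℝ) < (m:ℝ) := by exact_mod_cast hm
  set t0 := dens τ σ with ht0
  have ht0v : t0 = (lam τ σ : ℝ) / Cnk := by rw [ht0, dens, if_pos hkn]
  have ht0nn : 0 ≤ t0 := dens_nonneg τ σ
  have ht0le : t0 ≤ 1 := dens_le_one τ σ
  have hCC : Cmk * Cnm = Cnk * Dk := by
    rw [hCmk, hCnm, hCnk, hDk]; exact_mod_cast choose_chain hkm n
  -- the first moment
  have hA1 : ∑ π : Equiv.Perm (Fin m), dens τ π * dens π σ = t0 := by
    have hpt : ∀ π : Equiv.Perm (Fin m), dens τ π * dens π σ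
        = ((lam τ π * lam π σ : ℕ) : ℝ) / (Cmk * Cnm) := by
      intro π
      rw [dens, if_pos hkm, dens, if_pos hmn]
      push_cast
      rw [div_mul_div_comm]
    rw [Finset.sum_congr rfl (fun π _ => hpt π), ← Finset.sum_div,
      show ∑ π : Equiv.Perm (Fin m), ((lam τ π * lam π σ : ℕ) : ℝ)
        = ((∑ π : Equiv.Perm (Fin m), lam τ π * lam π σ : ℕ) : ℝ) by push_cast; rfl,
      sum_lam_mul τ σ hkm]
    rw [hCC]
    push_cast
    rw [ht0v]
    rw [mul_comm Cnk Dk, ← div_div, mul_div_assoc, div_self hDk0.ne', mul_one]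
  -- the second moment bound
  have hS2nat : ∑ π : Equiv.Perm (Fin m), lam τ π * lam τ π * lam π σ
      ≤ lam τ σ * lam τ σ * (n - 2 * k).choose (m - 2 * k)
        + (k * (m - 1).choose (k - 1)) * (lam τ σ * (n - k).choose (m - k)) := by
    calc ∑ π : Equiv.Perm (Fin m), lam τ π * lam τ π * lam π σ
        ≤ ∑ π : Equiv.Perm (Fin m),
            (lam2 τ π + lam τ π * (k * (m - 1).choose (k - 1))) * lam π σ := by
          apply Finset.sum_le_sum
          intro π _
          exact mul_le_mul_left (sq_le_lam2_add τ π) (lam π σ)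
      _ = ∑ π : Equiv.Perm (Fin m), lam2 τ π * lam π σ
          + (k * (m - 1).choose (k - 1)) * ∑ π : Equiv.Perm (Fin m), lam τ π * lam π σ := by
          rw [Finset.mul_sum, ← Finset.sum_add_distrib]
          exact Finset.sum_congr rfl fun π _ => by ring
      _ = lam2 τ σ * (n - 2 * k).choose (m - 2 * k)
          + (k * (m - 1).choose (k - 1)) * (lam τ σ * (n - k).choose (m - k)) := by
          rw [sum_lam2_mul τ σ h2k, sum_lam_mul τ σ hkm]
      _ ≤ lam τ σ * lam τ σ * (n - 2 * k).choose (m - 2 * k)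
          + (k * (m - 1).choose (k - 1)) * (lam τ σ * (n - k).choose (m - k)) := by
          exact Nat.add_le_add (Nat.mul_le_mul (lam2_le τ σ) (le_refl _)) (le_refl _)
  have hS2r : ∑ π : Equiv.Perm (Fin m), (dens τ π)^2 * dens π σ ≤ t0^2 + (k^2:ℝ)/m := by
    have hpt : ∀ π : Equiv.Perm (Fin m), (dens τ π)^2 * dens π σ
        = ((lam τ π * lam τ π * lam π σ : ℕ) : ℝ) / (Cmk^2 * Cnm) := by
      intro π
      rw [dens, if_pos hkm, dens, if_pos hmn]
      push_cast
      rw [div_pow, div_mul_div_comm]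
      ring_nf
      rw [hCmk, hCnm]
    rw [Finset.sum_congr rfl (fun π _ => hpt π), ← Finset.sum_div,
      show ∑ π : Equiv.Perm (Fin m), ((lam τ π * lam τ π * lam π σ : ℕ) : ℝ)
        = ((∑ π : Equiv.Perm (Fin m), lam τ π * lam τ π * lam π σ : ℕ) : ℝ) by push_cast; rfl]
    have hnum : ((∑ π : Equiv.Perm (Fin m), lam τ π * lam τ π * lam π σ : ℕ) : ℝ)
        ≤ (lam τ σ : ℝ) * (lam τ σ) * D2
          + ((k * (m - 1).choose (k - 1) : ℕ) : ℝ) * ((lam τ σ) * Dk) := by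
      rw [hD2, hDk]
      exact_mod_cast hS2nat
    have hden : (0:ℝ) < Cmk^2 * Cnm := by positivity
    have hsplit : ((lam τ σ : ℝ) * (lam τ σ) * D2
          + ((k * (m - 1).choose (k - 1) : ℕ) : ℝ) * ((lam τ σ) * Dk)) / (Cmk^2 * Cnm)
        ≤ t0^2 + (k^2:ℝ)/m := by
      rw [add_div]
      apply add_le_add
      · -- first term ≤ t0²
        have hR : Cnk * (Cnk * D2) ≤ Cmk * (Cmk * Cnm) := by
          rw [hCnk, hCmk, hCnm, hD2]
          exact_mod_cast chooseR h2k hmn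
        rw [ht0v, div_pow, div_le_div_iff₀ hden (by positivity)]
        have hlnn : (0:ℝ) ≤ (lam τ σ : ℝ) * (lam τ σ) := by positivity
        calc (lam τ σ : ℝ) * (lam τ σ) * D2 * Cnk^2
            = ((lam τ σ : ℝ) * (lam τ σ)) * (Cnk * (Cnk * D2)) := by ring
          _ ≤ ((lam τ σ : ℝ) * (lam τ σ)) * (Cmk * (Cmk * Cnm)) :=
              mul_le_mul_of_nonneg_left hR hlnn
          _ = (lam τ σ : ℝ)^2 * (Cmk^2 * Cnm) := by ring
      · -- second term ≤ k²/m
        have hkey : ((m:ℝ)) * ((k * (m - 1).choose (k - 1) : ℕ) : ℝ) = (k:ℝ)^2 * Cmk := by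
          rcases Nat.eq_zero_or_pos k with hk | hk
          · subst hk; simp
          · have h := mul_choose_pred hm hk
            have : m * (k * (m - 1).choose (k - 1)) = k^2 * m.choose k := by
              calc m * (k * (m - 1).choose (k - 1)) = k * (m * (m - 1).choose (k - 1)) := by ring
                _ = k * (m.choose k * k) := by rw [h]
                _ = k^2 * m.choose k := by ring
            rw [hCmk]
            exact_mod_cast this
        have ht0' : (lam τ σ : ℝ) * Dk / (Cmk * Cnm) = t0 := by
          rw [hCC, ht0v, mul_comm Cnk Dk, ← div_div, mul_div_assoc, div_self hDk0.ne', mul_one]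
        have heq : ((k * (m - 1).choose (k - 1) : ℕ) : ℝ) * ((lam τ σ) * Dk) / (Cmk^2 * Cnm)
            = ((k:ℝ)^2 / m) * ((lam τ σ : ℝ) * Dk / (Cmk * Cnm)) := by
          have hkc : ((k * (m - 1).choose (k - 1) : ℕ) : ℝ) = (k:ℝ)^2 * Cmk / m := by
            rw [eq_div_iff hm0.ne']
            rw [mul_comm] at hkey ⊢
            linarith [hkey]
          rw [hkc]
          field_simp
        rw [heq, ht0']
        calc ((k:ℝ)^2 / m) * t0 ≤ ((k:ℝ)^2 / m) * 1 := by
              apply mul_le_mul_of_nonneg_left ht0le (by positivity)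
          _ = (k:ℝ)^2 / m := by ring
    calc ((∑ π : Equiv.Perm (Fin m), lam τ π * lam τ π * lam π σ : ℕ) : ℝ) / (Cmk^2 * Cnm)
        ≤ ((lam τ σ : ℝ) * (lam τ σ) * D2
          + ((k * (m - 1).choose (k - 1) : ℕ) : ℝ) * ((lam τ σ) * Dk)) / (Cmk^2 * Cnm) :=
          (div_le_div_iff_of_pos_right hden).mpr hnum
      _ ≤ t0^2 + (k^2:ℝ)/m := hsplit
  have hexp : ∀ π : Equiv.Perm (Fin m), (dens τ π - t0)^2 * dens π σ
      = (dens τ π)^2 * dens π σ - 2*t0*(dens τ π * dens π σ) + t0^2 * dens π σ :=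
    fun π => by ring
  rw [Finset.sum_congr rfl (fun π _ => hexp π), Finset.sum_add_distrib,
    Finset.sum_sub_distrib, ← Finset.mul_sum, ← Finset.mul_sum, hA1, sum_dens σ hmn]
  linarith [hS2r]

/-- Chebyshev's inequality for sampling densities. -/
lemma cheb (τ : Equiv.Perm (Fin k)) (σ : Equiv.Perm (Fin n))
    (h2k : 2 * k ≤ m) (hm : 1 ≤ m) (hmn : m ≤ n) {δ : ℝ} (hδ : 0 < δ) :
    ∑ π : Equiv.Perm (Fin m), (if δ ≤ |dens τ π - dens τ σ| then dens π σ else 0)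
      ≤ (k^2 : ℝ) / (m * δ^2) := by
  have hterm : ∀ π : Equiv.Perm (Fin m),
      δ^2 * (if δ ≤ |dens τ π - dens τ σ| then dens π σ else 0)
        ≤ (dens τ π - dens τ σ)^2 * dens π σ := by
    intro π
    split_ifs with h
    · apply mul_le_mul_of_nonneg_right _ (dens_nonneg π σ)
      calc δ^2 ≤ |dens τ π - dens τ σ|^2 := by
            apply pow_le_pow_left₀ hδ.le h
        _ = (dens τ π - dens τ σ)^2 := sq_abs _
    · rw [mul_zero]
      have := dens_nonneg π σ
      positivity
  have hsum := Finset.sum_le_sum (fun π (_ : π ∈ Finset.univ) => hterm π)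
  rw [← Finset.mul_sum] at hsum
  have hvar := var_le τ σ h2k hm hmn
  have hδ2 : (0:ℝ) < δ^2 := by positivity
  have h1 : δ^2 * ∑ π : Equiv.Perm (Fin m),
      (if δ ≤ |dens τ π - dens τ σ| then dens π σ else 0) ≤ (k^2 : ℝ) / m :=
    le_trans hsum hvar
  rw [show (k^2 : ℝ) / (m * δ^2) = ((k^2 : ℝ)/m)/δ^2 by rw [div_div]]
  rw [le_div_iff₀ hδ2]
  linarith [h1]

end HKMS

/-- **Lemma (Hoppen–Kohayakawa–Moreira–Sampaio).** A bounded permutation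
parameter is testable if and only if it is finitely approximable. -/
theorem testable_iff_finitelyApproximable (f : Perms → ℝ) (M : ℝ)
    (hbd : ∀ σ : Perms, |f σ| ≤ M) :
    Testable f ↔ FinitelyApproximable f := by
  constructor
  · -- Testable → FinitelyApproximable
    intro hT ε hε
    have hε'pos : 0 < min (ε/2) (1/3 : ℝ) := lt_min (by linarith) (by norm_num)
    obtain ⟨n₀, ft, hft⟩ := hT (min (ε/2) (1/3 : ℝ)) hε'pos
    set ε' := min (ε/2) (1/3 : ℝ) with hε'def
    have hε'13 : ε' ≤ 1/3 := min_le_right _ _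
    have hε'2 : ε' ≤ ε/2 := min_le_left _ _
    set N := ((Fintype.card (Equiv.Perm (Fin n₀)) : ℕ) : ℝ) with hNdef
    have hN0 : (0:ℝ) ≤ N := by positivity
    have hδpos : 0 < (1 - 2*ε')/(N+1) := div_pos (by linarith) (by linarith)
    set δ := (1 - 2*ε')/(N+1) with hδdef
    refine ⟨δ, hδpos, n₀,
      (Finset.univ : Finset (Equiv.Perm (Fin n₀))).image (fun π => (⟨n₀, π⟩ : Perms)), ?_⟩
    intro σ ρ hσ hρ hclose
    have hNδ : N * δ < 1 - 2*ε' := by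
      rw [hδdef, mul_div_assoc', div_lt_iff₀ (by linarith : (0:ℝ) < N + 1)]
      nlinarith
    have hgσ : 1 - ε' ≤ ∑ π : Equiv.Perm (Fin n₀),
        (if |f σ - ft π| < ε' then dens π σ.2 else 0) := by
      have := hft σ hσ
      simpa [subDens] using this
    have hgρ : 1 - ε' ≤ ∑ π : Equiv.Perm (Fin n₀),
        (if |f ρ - ft π| < ε' then dens π ρ.2 else 0) := by
      have := hft ρ hρ
      simpa [subDens] using this
    have hsumρ : ∑ π : Equiv.Perm (Fin n₀), dens π ρ.2 = 1 := HKMS.sum_dens ρ.2 hρ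
    have hstep : (∑ π : Equiv.Perm (Fin n₀), (if |f σ - ft π| < ε' then dens π σ.2 else 0))
        - N * δ ≤ ∑ π : Equiv.Perm (Fin n₀), (if |f σ - ft π| < ε' then dens π ρ.2 else 0) := by
      have hpt : ∀ π : Equiv.Perm (Fin n₀),
          (if |f σ - ft π| < ε' then dens π σ.2 else 0) - δ
            ≤ (if |f σ - ft π| < ε' then dens π ρ.2 else 0) := by
        intro π
        have hd := hclose ⟨n₀, π⟩ (Finset.mem_image.mpr ⟨π, Finset.mem_univ _, rfl⟩)
        rw [subDens, subDens] at hd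
        have habs := abs_lt.mp hd
        split_ifs with h
        · linarith [habs.1, habs.2]
        · linarith [hδpos]
      have hs := Finset.sum_le_sum (fun π (_ : π ∈ Finset.univ) => hpt π)
      rw [Finset.sum_sub_distrib, Finset.sum_const] at hs
      have hcard : ((Finset.univ : Finset (Equiv.Perm (Fin n₀))).card • δ) = N * δ := by
        rw [Finset.card_univ, nsmul_eq_mul, hNdef]
      rw [hcard] at hs
      exact hs
    have hkey : 0 < ∑ π : Equiv.Perm (Fin n₀),
        (if |f σ - ft π| < ε' ∧ |f ρ - ft π| < ε' then dens π ρ.2 else 0) := by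
      have hptw : ∀ π : Equiv.Perm (Fin n₀),
          (if |f σ - ft π| < ε' then dens π ρ.2 else 0)
            + (if |f ρ - ft π| < ε' then dens π ρ.2 else 0) - dens π ρ.2
          ≤ (if |f σ - ft π| < ε' ∧ |f ρ - ft π| < ε' then dens π ρ.2 else 0) := by
        intro π
        have h0 := HKMS.dens_nonneg π ρ.2
        by_cases h1 : |f σ - ft π| < ε' <;> by_cases h2 : |f ρ - ft π| < ε' <;>
          simp [h1, h2] <;> linarith
      have hs := Finset.sum_le_sum (fun π (_ : π ∈ Finset.univ) => hptw π)
      rw [Finset.sum_sub_distrib, Finset.sum_add_distrib, hsumρ] at hs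
      linarith [hgσ, hgρ, hstep, hs, hNδ]
    have hkey' : ∑ _π : Equiv.Perm (Fin n₀), (0:ℝ)
        < ∑ π : Equiv.Perm (Fin n₀),
          (if |f σ - ft π| < ε' ∧ |f ρ - ft π| < ε' then dens π ρ.2 else 0) := by
      simpa using hkey
    obtain ⟨π, -, hπ⟩ := Finset.exists_lt_of_sum_lt hkey'
    by_cases hc : |f σ - ft π| < ε' ∧ |f ρ - ft π| < ε'
    · have h1 := hc.1
      have h2 := hc.2
      calc |f σ - f ρ| ≤ |f σ - ft π| + |ft π - f ρ| := abs_sub_le _ _ _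
        _ = |f σ - ft π| + |f ρ - ft π| := by rw [abs_sub_comm (ft π) (f ρ)]
        _ < ε' + ε' := by linarith
        _ ≤ ε := by linarith
    · rw [if_neg hc] at hπ
      exact absurd hπ (lt_irrefl _)
  · -- FinitelyApproximable → Testable
    intro hFA ε hε
    obtain ⟨δ, hδ, n₀, A, hA⟩ := hFA ε hε
    set K := A.sup (fun τ => τ.1) with hKdef
    set B := ((A.card : ℝ) * (K:ℝ)^2) / δ^2 with hBdef
    have hB0 : 0 ≤ B := by positivity
    obtain ⟨m, hm1, hm2K, hmn₀, hmB⟩ : ∃ m : ℕ, 1 ≤ m ∧ 2*K ≤ m ∧ n₀ ≤ m ∧ B / m ≤ ε := by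
      refine ⟨max (max 1 (max (2*K) n₀)) ⌈B / ε⌉₊, ?_, ?_, ?_, ?_⟩
      · exact le_trans (le_max_left 1 _) (le_max_left _ _)
      · exact le_trans (le_trans (le_max_left (2*K) n₀) (le_max_right 1 _)) (le_max_left _ _)
      · exact le_trans (le_trans (le_max_right (2*K) n₀) (le_max_right 1 _)) (le_max_left _ _)
      · set m := max (max 1 (max (2*K) n₀)) ⌈B / ε⌉₊ with hmdef
        have hm0 : (0:ℝ) < m := by
          have : 1 ≤ m := le_trans (le_max_left 1 _) (le_max_left _ _)
          exact_mod_cast this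
        rw [div_le_iff₀ hm0]
        have hceil : B / ε ≤ (⌈B / ε⌉₊ : ℝ) := Nat.le_ceil _
        have hmceil : ((⌈B / ε⌉₊ : ℕ) : ℝ) ≤ (m : ℝ) := by
          exact_mod_cast le_max_right (max 1 (max (2*K) n₀)) ⌈B / ε⌉₊
        have : B / ε ≤ (m:ℝ) := le_trans hceil hmceil
        rw [div_le_iff₀ hε] at this
        linarith
    refine ⟨m, fun π => f ⟨m, π⟩, ?_⟩
    intro σ hσm
    have hmn : m ≤ σ.1 := hσm
    have hsum1 : ∑ π : Equiv.Perm (Fin m), dens π σ.2 = 1 := HKMS.sum_dens σ.2 hmn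
    have hsubset : ∀ π : Equiv.Perm (Fin m), ¬ |f σ - f ⟨m, π⟩| < ε →
        ∃ τ ∈ A, δ ≤ |dens τ.2 σ.2 - dens τ.2 π| := by
      intro π hbad
      by_contra hcon
      push_neg at hcon
      exact hbad (hA σ ⟨m, π⟩ (le_trans hmn₀ hmn) hmn₀
        (fun τ hτ => by
          have := hcon τ hτ
          rw [subDens, subDens]
          exact this))
    have hgoal : ∑ π : Equiv.Perm (Fin m),
        (if |f σ - f ⟨m, π⟩| < ε then dens π σ.2 else 0)
        = 1 - ∑ π : Equiv.Perm (Fin m),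
          (if ¬ |f σ - f ⟨m, π⟩| < ε then dens π σ.2 else 0) := by
      rw [← hsum1, ← Finset.sum_sub_distrib]
      apply Finset.sum_congr rfl
      intro π _
      by_cases h : |f σ - f ⟨m, π⟩| < ε <;> simp [h]
    have hbadsum : ∑ π : Equiv.Perm (Fin m),
        (if ¬ |f σ - f ⟨m, π⟩| < ε then dens π σ.2 else 0) ≤ ε := by
      have hpt : ∀ π : Equiv.Perm (Fin m),
          (if ¬ |f σ - f ⟨m, π⟩| < ε then dens π σ.2 else 0)
          ≤ ∑ τ ∈ A, (if δ ≤ |dens τ.2 π - dens τ.2 σ.2| then dens π σ.2 else 0) := by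
        intro π
        split_ifs with h
        · apply Finset.sum_nonneg
          intro τ' _
          split_ifs
          · exact HKMS.dens_nonneg π σ.2
          · exact le_refl 0
        · obtain ⟨τ, hτA, hτd⟩ := hsubset π h
          rw [abs_sub_comm] at hτd
          have hterm : dens π σ.2
              ≤ (if δ ≤ |dens τ.2 π - dens τ.2 σ.2| then dens π σ.2 else 0) := by
            rw [if_pos hτd]
          refine le_trans hterm (Finset.single_le_sum
            (f := fun τ' : Perms =>
              if δ ≤ |dens τ'.2 π - dens τ'.2 σ.2| then dens π σ.2 else 0)
            (fun τ' _ => ?_) hτA)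
          split_ifs
          · exact HKMS.dens_nonneg π σ.2
          · exact le_refl 0
      have hs := Finset.sum_le_sum (fun π (_ : π ∈ Finset.univ) => hpt π)
      rw [Finset.sum_comm] at hs
      have hτbound : ∀ τ ∈ A, ∑ π : Equiv.Perm (Fin m),
          (if δ ≤ |dens τ.2 π - dens τ.2 σ.2| then dens π σ.2 else 0)
          ≤ ((K:ℝ)^2)/(m * δ^2) := by
        intro τ hτ
        have hkK : τ.1 ≤ K := Finset.le_sup hτ
        have h2k : 2*τ.1 ≤ m := by omega
        have hc := HKMS.cheb τ.2 σ.2 h2k hm1 hmn hδ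
        refine le_trans hc ?_
        have hky : ((τ.1 : ℝ))^2 ≤ ((K : ℝ))^2 := by
          have h1 : ((τ.1 : ℕ) : ℝ) ≤ ((K : ℕ) : ℝ) := by exact_mod_cast hkK
          have h0 : (0:ℝ) ≤ ((τ.1 : ℕ) : ℝ) := by positivity
          nlinarith
        have hden : (0:ℝ) < (m : ℝ) * δ^2 := by
          have hm0' : (0:ℝ) < (m : ℝ) := by exact_mod_cast hm1
          positivity
        exact (div_le_div_iff_of_pos_right hden).mpr hky
      have hs2 : ∑ τ ∈ A, ∑ π : Equiv.Perm (Fin m),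
          (if δ ≤ |dens τ.2 π - dens τ.2 σ.2| then dens π σ.2 else 0)
          ≤ ∑ _τ ∈ A, ((K:ℝ)^2)/((m : ℝ) * δ^2) := Finset.sum_le_sum hτbound
      rw [Finset.sum_const, nsmul_eq_mul] at hs2
      have hfinal : (A.card : ℝ) * (((K:ℝ)^2)/((m : ℝ) * δ^2)) ≤ ε := by
        have hm0' : ((m:ℕ) : ℝ) ≠ 0 := by
          have : (0:ℝ) < (m : ℝ) := by exact_mod_cast hm1
          exact this.ne'
        have heq : (A.card : ℝ) * (((K:ℝ)^2)/((m : ℝ) * δ^2)) = B / m := by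
          rw [hBdef, div_div, ← mul_div_assoc, mul_comm (δ^2) ((m : ℕ) : ℝ)]
        rw [heq]
        exact hmB
      calc ∑ π : Equiv.Perm (Fin m),
          (if ¬ |f σ - f ⟨m, π⟩| < ε then dens π σ.2 else 0)
          ≤ ∑ τ ∈ A, ∑ π : Equiv.Perm (Fin m),
            (if δ ≤ |dens τ.2 π - dens τ.2 σ.2| then dens π σ.2 else 0) := hs
        _ ≤ (A.card : ℝ) * (((K:ℝ)^2)/((m : ℝ) * δ^2)) := hs2
        _ ≤ ε := hfinal
    simp only [subDens]
    rw [hgoal]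
    linarith [hbadsum]
end

section
/- Let (τ_i)_{i∈ℕ} be a sequence of permutations of strictly increasing orders and let (γ_k)_{k≥2} be positive reals with the following property: for every k ≥ 2, every δ > 0 and every N ∈ ℕ there exist permutations σ and σ' of orders at least N such that |t(ρ,σ) − t(ρ,σ')| < δ for every permutation ρ of order at most |τ_{k−1}|, and t(τ_k,σ) − t(τ_k,σ') > γ_k − δ. Let (α_i)_{i∈ℕ} be positive reals satisfying Σ_{i∈ℕ} α_i < 1/2 and Σ_{i>k} α_i < α_k·γ_k/4 for every k ≥ 2. Then the permutation parameter f(σ) = Σ_{i∈ℕ} α_i·t(τ_i,σ) is not finitely forcible. -/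
open Filter Topology

section Aux

lemma lam_le_choose {k n : ℕ} (π : Equiv.Perm (Fin k)) (σ : Equiv.Perm (Fin n)) :
    lam π σ ≤ n.choose k := by
  classical
  have hinj : Function.Injective
      (fun f : {f : Fin k → Fin n // IsOcc π σ f} =>
        (⟨Finset.image f.1 Finset.univ, by
          rw [Finset.mem_powersetCard]
          exact ⟨Finset.subset_univ _, by
            rw [Finset.card_image_of_injective _ f.2.1.injective, Finset.card_univ,
              Fintype.card_fin]⟩⟩ :
          (Finset.powersetCard k (Finset.univ : Finset (Fin n))))) := by
    rintro ⟨f, hf⟩ ⟨g, hg⟩ h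
    simp only [Subtype.mk.injEq] at h
    have : f = g := by
      haveI : WellFoundedLT (Fin k) := inferInstance
      rw [← StrictMono.range_inj hf.1 hg.1]
      rw [← Set.image_univ, ← Set.image_univ, ← Finset.coe_univ, ← Finset.coe_image,
        ← Finset.coe_image, h]
    simpa using this
  have h1 : lam π σ ≤ Nat.card (Finset.powersetCard k (Finset.univ : Finset (Fin n))) :=
    Nat.card_le_card_of_injective _ hinj
  have h2 : Nat.card (Finset.powersetCard k (Finset.univ : Finset (Fin n)))
      = n.choose k := by
    rw [Nat.card_eq_finsetCard, Finset.card_powersetCard, Finset.card_univ, Fintype.card_fin]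
  omega

lemma dens_nonneg {k n : ℕ} (π : Equiv.Perm (Fin k)) (σ : Equiv.Perm (Fin n)) :
    0 ≤ dens π σ := by
  unfold dens; split
  · positivity
  · exact le_refl 0

lemma dens_le_one {k n : ℕ} (π : Equiv.Perm (Fin k)) (σ : Equiv.Perm (Fin n)) :
    dens π σ ≤ 1 := by
  unfold dens; split
  · rename_i h
    rw [div_le_one (by exact_mod_cast Nat.choose_pos h)]
    exact_mod_cast lam_le_choose π σ
  · norm_num

lemma subDens_nonneg (π σ : Perms) : 0 ≤ subDens π σ := dens_nonneg _ _

lemma subDens_le_one (π σ : Perms) : subDens π σ ≤ 1 := dens_le_one _ _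

end Aux

/-- **Lemma (non-forcibility).** Let `(τ_i)` be a sequence of permutations of
strictly increasing orders and `(γ_k)` positive reals such that for every `k ≥ 2`,
every `δ > 0` and every `N` there are permutations `σ, σ'` of orders at least `N`
agreeing within `δ` on all densities of permutations of order at most `|τ_{k−1}|`
but with `t(τ_k,σ) − t(τ_k,σ') > γ_k − δ`.  If `(α_i)` are positive reals with
`Σ α_i < 1/2` and `Σ_{i>k} α_i < α_k·γ_k/4` for every `k ≥ 2`, then the parameter
`f(σ) = Σ_i α_i · t(τ_i,σ)` is not finitely forcible. -/
theorem not_finitelyForcible_of_oscillation (τ : ℕ → Perms)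
    (horders : StrictMono fun i => (τ i).1)
    (γ : ℕ → ℝ) (hγ : ∀ k, 2 ≤ k → 0 < γ k)
    (hosc : ∀ k, 2 ≤ k → ∀ δ : ℝ, 0 < δ → ∀ N : ℕ,
      ∃ σ σ' : Perms, N ≤ σ.1 ∧ N ≤ σ'.1 ∧
        (∀ ρ : Perms, ρ.1 ≤ (τ (k - 1)).1 → |subDens ρ σ - subDens ρ σ'| < δ) ∧
        γ k - δ < subDens (τ k) σ - subDens (τ k) σ')
    (α : ℕ → ℝ) (hpos : ∀ i, 0 < α i) (hsummable : Summable α)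
    (hhalf : ∑' i, α i < 1 / 2)
    (htail : ∀ k, 2 ≤ k → ∑' i : {i : ℕ // k < i}, α i.1 < α k * γ k / 4) :
    ¬ FinitelyForcible (fun σ => ∑' i, α i * subDens (τ i) σ) := by
  classical
  rintro ⟨A, hA⟩
  set M := A.sup (fun ρ => ρ.1) with hMdef
  set k := M + 2 with hkdef
  have hk2 : 2 ≤ k := by omega
  have hαk := hpos k
  have hγk := hγ k hk2
  have hε : (0:ℝ) < α k * γ k / 4 := by positivity
  obtain ⟨n₀, δ, hδ, hforce⟩ := hA (α k * γ k / 4) hε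
  set δ' := min δ (α k * γ k / 4 / (α k + 1)) with hδ'def
  have hδ'pos : 0 < δ' := lt_min hδ (by positivity)
  obtain ⟨σ, σ', hn, hn', hclose, hgap⟩ := hosc k hk2 δ' hδ'pos n₀
  -- the forcibility conclusion applies
  have hAbound : ∀ ρ ∈ A, ρ.1 ≤ (τ (k - 1)).1 := by
    intro ρ hρ
    have h1 : ρ.1 ≤ M := Finset.le_sup (f := fun ρ : Perms => ρ.1) hρ
    have h2 : k - 1 ≤ (τ (k - 1)).1 := horders.le_apply
    omega
  have hsmall : |(∑' i, α i * subDens (τ i) σ) - ∑' i, α i * subDens (τ i) σ'|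
      < α k * γ k / 4 :=
    hforce σ σ' hn hn'
      (fun ρ hρ => lt_of_lt_of_le (hclose ρ (hAbound ρ hρ)) (min_le_left _ _))
  -- summability facts
  have hsumσ : Summable (fun i => α i * subDens (τ i) σ) :=
    Summable.of_nonneg_of_le
      (fun i => mul_nonneg (hpos i).le (subDens_nonneg _ _))
      (fun i => mul_le_of_le_one_right (hpos i).le (subDens_le_one _ _)) hsummable
  have hsumσ' : Summable (fun i => α i * subDens (τ i) σ') :=
    Summable.of_nonneg_of_le
      (fun i => mul_nonneg (hpos i).le (subDens_nonneg _ _))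
      (fun i => mul_le_of_le_one_right (hpos i).le (subDens_le_one _ _)) hsummable
  have hgsum : Summable (fun i => α i * (subDens (τ i) σ - subDens (τ i) σ')) := by
    have heq : (fun i => α i * (subDens (τ i) σ - subDens (τ i) σ'))
        = fun i => α i * subDens (τ i) σ - α i * subDens (τ i) σ' := by
      funext i; ring
    rw [heq]; exact hsumσ.sub hsumσ'
  have hFeq : (∑' i, α i * subDens (τ i) σ) - (∑' i, α i * subDens (τ i) σ')
      = ∑' i, α i * (subDens (τ i) σ - subDens (τ i) σ') := by
    rw [← Summable.tsum_sub hsumσ hsumσ']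
    exact tsum_congr fun i => by ring
  -- splitting the sum
  have hsplit := Summable.sum_add_tsum_subtype_compl hgsum (Finset.range (k + 1))
  -- bound on the finite part
  have hfin1 : ∀ i ∈ Finset.range k,
      -(δ' * α i) ≤ α i * (subDens (τ i) σ - subDens (τ i) σ') := by
    intro i hi
    have hik : i ≤ k - 1 := by
      have := Finset.mem_range.mp hi; omega
    have hle : (τ i).1 ≤ (τ (k - 1)).1 := horders.monotone hik
    have h2 := (abs_lt.mp (hclose (τ i) hle)).1
    nlinarith [hpos i]
  have hfin2 : -(δ' * ∑ i ∈ Finset.range k, α i)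
      ≤ ∑ i ∈ Finset.range k, α i * (subDens (τ i) σ - subDens (τ i) σ') := by
    have := Finset.sum_le_sum hfin1
    rwa [Finset.sum_neg_distrib, ← Finset.mul_sum] at this
  have hαS : ∑ i ∈ Finset.range k, α i ≤ 1 / 2 :=
    le_of_lt (lt_of_le_of_lt
      (Summable.sum_le_tsum (Finset.range k) (fun i _ => (hpos i).le) hsummable) hhalf)
  have hkterm : α k * (γ k - δ') ≤ α k * (subDens (τ k) σ - subDens (τ k) σ') :=
    mul_le_mul_of_nonneg_left hgap.le hαk.le
  -- bound on the tail
  have hbd : ∀ i : ℕ, |α i * (subDens (τ i) σ - subDens (τ i) σ')| ≤ 2 * α i := by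
    intro i
    have h1 := subDens_nonneg (τ i) σ
    have h2 := subDens_le_one (τ i) σ
    have h3 := subDens_nonneg (τ i) σ'
    have h4 := subDens_le_one (τ i) σ'
    rw [abs_mul, abs_of_pos (hpos i)]
    have h5 : |subDens (τ i) σ - subDens (τ i) σ'| ≤ 2 := by
      rw [abs_le]; constructor <;> linarith
    calc α i * |subDens (τ i) σ - subDens (τ i) σ'| ≤ α i * 2 :=
          mul_le_mul_of_nonneg_left h5 (hpos i).le
      _ = 2 * α i := by ring
  have hsubα : Summable (fun i : {x : ℕ // x ∉ Finset.range (k + 1)} => α i.1) :=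
    hsummable.subtype {x : ℕ | x ∉ Finset.range (k + 1)}
  have hsubg : Summable (fun i : {x : ℕ // x ∉ Finset.range (k + 1)} =>
      α i.1 * (subDens (τ i.1) σ - subDens (τ i.1) σ')) :=
    hgsum.subtype {x : ℕ | x ∉ Finset.range (k + 1)}
  have habs : Summable (fun i : {x : ℕ // x ∉ Finset.range (k + 1)} =>
      |α i.1 * (subDens (τ i.1) σ - subDens (τ i.1) σ')|) :=
    Summable.of_nonneg_of_le (fun i => abs_nonneg _) (fun i => hbd i.1) (hsubα.mul_left 2)
  have hiff : ∀ i : ℕ, (i ∉ Finset.range (k + 1)) ↔ k < i := fun i => by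
    simp only [Finset.mem_range]; omega
  have hCα : ∑' i : {x : ℕ // x ∉ Finset.range (k + 1)}, α i.1 < α k * γ k / 4 := by
    have he := Equiv.tsum_eq (Equiv.subtypeEquivRight hiff)
      (fun i : {i : ℕ // k < i} => α i.1)
    have h0 : ∑' x : {x : ℕ // x ∉ Finset.range (k + 1)},
          α ((Equiv.subtypeEquivRight hiff x : {i : ℕ // k < i}) : ℕ)
        = ∑' x : {x : ℕ // x ∉ Finset.range (k + 1)}, α x.1 :=
      tsum_congr (fun x => rfl)
    calc ∑' x : {x : ℕ // x ∉ Finset.range (k + 1)}, α x.1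
        = ∑' i : {i : ℕ // k < i}, α i.1 := h0.symm.trans he
      _ < α k * γ k / 4 := htail k hk2
  have hTbound : -(2 * ∑' i : {x : ℕ // x ∉ Finset.range (k + 1)}, α i.1)
      ≤ ∑' i : {x : ℕ // x ∉ Finset.range (k + 1)},
          α i.1 * (subDens (τ i.1) σ - subDens (τ i.1) σ') := by
    have h1 : |∑' i : {x : ℕ // x ∉ Finset.range (k + 1)},
          α i.1 * (subDens (τ i.1) σ - subDens (τ i.1) σ')|
        ≤ ∑' i : {x : ℕ // x ∉ Finset.range (k + 1)},
          |α i.1 * (subDens (τ i.1) σ - subDens (τ i.1) σ')| := by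
      have hnn := norm_tsum_le_tsum_norm
        (f := fun i : {x : ℕ // x ∉ Finset.range (k + 1)} =>
          α i.1 * (subDens (τ i.1) σ - subDens (τ i.1) σ'))
        (by simpa only [Real.norm_eq_abs] using habs)
      simpa only [Real.norm_eq_abs] using hnn
    have h2 : ∑' i : {x : ℕ // x ∉ Finset.range (k + 1)},
          |α i.1 * (subDens (τ i.1) σ - subDens (τ i.1) σ')|
        ≤ ∑' i : {x : ℕ // x ∉ Finset.range (k + 1)}, 2 * α i.1 :=
      Summable.tsum_le_tsum (fun i => hbd i.1) habs (hsubα.mul_left 2)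
    have h3 : ∑' i : {x : ℕ // x ∉ Finset.range (k + 1)}, 2 * α i.1
        = 2 * ∑' i : {x : ℕ // x ∉ Finset.range (k + 1)}, α i.1 := tsum_mul_left
    have h4 := (abs_le.mp (h1.trans (h3 ▸ h2))).1
    linarith
  -- final contradiction
  have hδ'4 : δ' * (α k + 1) ≤ α k * γ k / 4 := by
    have h1 : δ' ≤ α k * γ k / 4 / (α k + 1) := min_le_right _ _
    have h2 : (0:ℝ) < α k + 1 := by linarith
    calc δ' * (α k + 1) ≤ (α k * γ k / 4 / (α k + 1)) * (α k + 1) := by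
          exact mul_le_mul_of_nonneg_right h1 h2.le
      _ = α k * γ k / 4 := by field_simp
  have hdS : δ' * (∑ i ∈ Finset.range k, α i) ≤ δ' * (1 / 2) :=
    mul_le_mul_of_nonneg_left hαS hδ'pos.le
  have hFlt := (abs_lt.mp hsmall).2
  rw [hFeq] at hFlt
  rw [Finset.sum_range_succ] at hsplit
  nlinarith [hsplit, hfin2, hkterm, hTbound, hCα, hδ'4, hdS, hFlt, hδ'pos, hαk, hγk]
end

section
/- Let τ be a non-trivial indecomposable permutation of order k, let m be a positive integer, let Φ_1,…,Φ_m be permutons and let x = (x_1,…,x_m) be positive reals with Σ_{i∈[m]} x_i ≤ 1. Then the direct sum Φ^x = ⊕_{i∈[m]}(x_i, Φ_i) satisfies t(τ,Φ^x) = Σ_{i=1}^m x_i^k · t(τ,Φ_i). -/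
open MeasureTheory

/-- A permuton: a Borel probability measure on `[0,1]²` (modeled as a measure on
`ℝ × ℝ` giving full mass to the unit square) with uniform marginals. -/
structure Permuton where
  μ : Measure (ℝ × ℝ)
  prob : IsProbabilityMeasure μ
  margX : ∀ a b : ℝ, 0 ≤ a → a ≤ b → b ≤ 1 →
    μ (Set.Icc a b ×ˢ Set.Icc (0 : ℝ) 1) = ENNReal.ofReal (b - a)
  margY : ∀ a b : ℝ, 0 ≤ a → a ≤ b → b ≤ 1 →
    μ (Set.Icc (0 : ℝ) 1 ×ˢ Set.Icc a b) = ENNReal.ofReal (b - a)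

/-- The density `t(τ,P)` of a pattern `τ` of order `k` in a permuton `P`:
`k!` times the `μ^{⊗k}`-measure of the set of `k`-tuples of points whose first
coordinates are increasing and whose second coordinates follow the pattern `τ`. -/
noncomputable def pdens {k : ℕ} (τ : Equiv.Perm (Fin k)) (P : Permuton) : ℝ :=
  haveI : IsProbabilityMeasure P.μ := P.prob
  (k.factorial : ℝ) *
    (Measure.pi (fun _ : Fin k => P.μ)
      {g : Fin k → ℝ × ℝ |
        (∀ i j : Fin k, i < j → (g i).1 < (g j).1) ∧
        (∀ i j : Fin k, (g i).2 < (g j).2 ↔ τ i < τ j)}).toReal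

/-- The partial sum `c_{i-1} = p_1 + … + p_{i-1}` (the left endpoint of the `i`-th
diagonal block). -/
noncomputable def psum {m : ℕ} (p : Fin m → ℝ) (i : Fin m) : ℝ :=
  ∑ j ∈ Finset.univ.filter (fun j => j < i), p j

/-- The direct sum `⊕_{i∈[m]} (p_i, Φ_i)` of the permutons `Φ_i` with weights
`p_i`: each `Φ_i` is rescaled into the diagonal square of side `p_i` starting at
`(c_{i-1}, c_{i-1})`, and the remaining mass is placed uniformly on the main
diagonal above `(Σ p_i, Σ p_i)`. -/
noncomputable def directSum (m : ℕ) (Φ : Fin m → Permuton) (p : Fin m → ℝ) :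
    Measure (ℝ × ℝ) :=
  (∑ i : Fin m, ENNReal.ofReal (p i) •
      ((Φ i).μ.map fun z : ℝ × ℝ => (psum p i + p i * z.1, psum p i + p i * z.2)))
  + (volume.restrict (Set.Icc (∑ i, p i) 1)).map (fun x : ℝ => (x, x))


section Helpers
open Set ENNReal

lemma cut_of_cross {k : ℕ} (τ : Equiv.Perm (Fin k)) (j0 : ℕ) (h1 : 1 ≤ j0) (h2 : j0 < k)
    (hc : ∀ i i' : Fin k, (i : ℕ) < j0 → j0 ≤ (i' : ℕ) → τ i < τ i') :
    ∀ i : Fin k, ((τ i : ℕ) < j0 ↔ (i : ℕ) < j0) := by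
  classical
  set B : Finset (Fin k) := Finset.univ.filter (fun i => (i : ℕ) < j0) with hB
  have hBIio : B = Finset.Iio (⟨j0, h2⟩ : Fin k) := by
    ext i; simp [hB, Fin.lt_def]
  have hBcard : B.card = j0 := by rw [hBIio, Fin.card_Iio]
  set S : Finset (Fin k) := B.image τ with hS
  have hScard : S.card = j0 := by
    rw [hS, Finset.card_image_of_injective _ τ.injective, hBcard]
  have hmemS : ∀ i : Fin k, τ i ∈ S ↔ i ∈ B := by
    intro i
    constructor
    · intro h
      obtain ⟨i'', hi'', he⟩ := Finset.mem_image.1 h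
      rwa [← τ.injective he]
    · intro h; exact Finset.mem_image_of_mem _ h
  have hdown : ∀ v w : Fin k, v ∈ S → w ≤ v → w ∈ S := by
    intro v w hv hwv
    by_contra hw
    obtain ⟨i, hi, rfl⟩ := Finset.mem_image.1 hv
    have hi' : ¬ ((τ.symm w : ℕ) < j0) := by
      intro hlt
      have : τ.symm w ∈ B := by simp [hB, hlt]
      have := hmemS (τ.symm w)
      rw [Equiv.apply_symm_apply] at this
      exact hw (this.2 ‹_›)
    have hib : (i : ℕ) < j0 := by simpa [hB] using hi
    have := hc i (τ.symm w) hib (le_of_not_gt hi')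
    rw [Equiv.apply_symm_apply] at this
    exact absurd hwv (not_le.2 this)
  have hmem' : ∀ v : Fin k, v ∈ S ↔ (v : ℕ) < j0 := by
    intro v
    constructor
    · intro hv
      have hsub : Finset.Iic v ⊆ S := fun w hw => hdown v w hv (Finset.mem_Iic.1 hw)
      have := Finset.card_le_card hsub
      rw [Fin.card_Iic, hScard] at this
      omega
    · intro hv
      by_contra hvS
      have hsub : S ⊆ Finset.Iio v := by
        intro s hs
        rw [Finset.mem_Iio]
        by_contra hle
        exact hvS (hdown s v hs (le_of_not_gt hle))
      have := Finset.card_le_card hsub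
      rw [Fin.card_Iio, hScard] at this
      omega
  intro i
  rw [← hmem' (τ i), hmemS]
  simp [hB]


lemma pi_finset_sum {ι J : Type*} [Fintype ι] [DecidableEq ι] [Fintype J] {α : Type*} [MeasurableSpace α]
    (ν : J → Measure α) [∀ j, IsFiniteMeasure (ν j)] :
    Measure.pi (fun _ : ι => ∑ j, ν j) = ∑ f : ι → J, Measure.pi (fun i => ν (f i)) := by
  classical
  haveI : IsFiniteMeasure (∑ j, ν j) := by
    constructor
    rw [Measure.finset_sum_apply]
    exact ENNReal.sum_lt_top.2 fun j _ => measure_lt_top _ _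
  refine Measure.pi_eq fun s hs => ?_
  rw [Measure.finset_sum_apply]
  simp_rw [Measure.pi_pi, Measure.finset_sum_apply]
  rw [Fintype.prod_sum (fun i j => ν j (s i))]

lemma pi_smul_const {ι : Type*} [Fintype ι] {α : Type*} [MeasurableSpace α]
    (c : ℝ≥0∞) (hc : c ≠ ⊤) (ν : Measure α) [IsFiniteMeasure ν] :
    Measure.pi (fun _ : ι => c • ν) = (c ^ Fintype.card ι) • Measure.pi (fun _ : ι => ν) := by
  haveI : IsFiniteMeasure (c • ν) := by
    constructor
    rw [Measure.smul_apply, smul_eq_mul]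
    exact ENNReal.mul_lt_top hc.lt_top (measure_lt_top _ _)
  refine Measure.pi_eq fun s hs => ?_
  rw [Measure.smul_apply, Measure.pi_pi, smul_eq_mul]
  simp_rw [Measure.smul_apply, smul_eq_mul]
  rw [Finset.prod_mul_distrib, Finset.prod_const, Finset.card_univ]

lemma pi_zero_of_conc {ι : Type*} [Fintype ι] {α : Type*} [MeasurableSpace α]
    (ν : ι → Measure α) [∀ i, SigmaFinite (ν i)] (Q : ι → Set α)
    (hQ : ∀ i, MeasurableSet (Q i)) (hconc : ∀ i, ν i (Q i)ᶜ = 0) (S : Set (ι → α))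
    (hempty : S ∩ {g | ∀ i, g i ∈ Q i} = ∅) : Measure.pi ν S = 0 := by
  classical
  refine le_antisymm ?_ zero_le
  have hB : {g : ι → α | ∀ i, g i ∈ Q i} = Set.pi univ Q := by
    ext g; simp [Set.mem_pi]
  have hBc : Measure.pi ν (Set.pi univ Q)ᶜ = 0 := by
    have hsub : (Set.pi univ Q)ᶜ ⊆ ⋃ i, {g : ι → α | g i ∈ (Q i)ᶜ} := by
      intro g hg
      simp only [Set.mem_compl_iff, Set.mem_pi, not_forall] at hg
      obtain ⟨i, _, hgi⟩ := hg
      exact Set.mem_iUnion.2 ⟨i, hgi⟩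
    refine measure_mono_null hsub (measure_iUnion_null fun i => ?_)
    have : {g : ι → α | g i ∈ (Q i)ᶜ} = Set.pi univ (fun i' => if h : i' = i then (Q i)ᶜ else univ) := by
      ext g
      simp only [Set.mem_pi, Set.mem_univ, true_implies, Set.mem_setOf_eq]
      constructor
      · intro h i'
        by_cases hi : i' = i
        · subst hi; simp [h]
        · simp [hi]
      · intro h; have := h i; simpa using this
    rw [this, Measure.pi_pi]
    refine Finset.prod_eq_zero (Finset.mem_univ i) ?_
    simp [hconc i]
  calc Measure.pi ν S ≤ Measure.pi ν (S ∩ Set.pi univ Q) + Measure.pi ν (Set.pi univ Q)ᶜ := by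
        refine le_trans (measure_mono ?_) (measure_union_le _ _)
        intro g hg
        by_cases h : g ∈ Set.pi univ Q
        · exact Or.inl ⟨hg, h⟩
        · exact Or.inr h
    _ = 0 := by rw [← hB] at *; rw [hempty, hBc]; simp

lemma vol_Icc_inter_Ico (a b l h : ℝ) :
    volume (Icc a b ∩ Ico l h) = ENNReal.ofReal (min b h - max a l) := by
  apply le_antisymm
  · refine le_trans (measure_mono ?_) (le_of_eq Real.volume_Icc)
    intro t ⟨⟨ht1, ht2⟩, ht3, ht4⟩
    exact ⟨max_le ht1 ht3, le_min ht2 (le_of_lt ht4)⟩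
  · refine le_trans (le_of_eq Real.volume_Ioo.symm) (measure_mono ?_)
    intro t ⟨ht1, ht2⟩
    have h1 := max_lt_iff.1 ht1
    have h2 := lt_min_iff.1 ht2
    exact ⟨⟨le_of_lt h1.1, le_of_lt h2.1⟩, le_of_lt h1.2, h2.2⟩

lemma vol_Icc_inter_Icc (a b l h : ℝ) :
    volume (Icc a b ∩ Icc l h) = ENNReal.ofReal (min b h - max a l) := by
  rw [Set.Icc_inter_Icc, Real.volume_Icc]

lemma measure_inter_square (μ : Measure (ℝ × ℝ)) [IsProbabilityMeasure μ]
    (hsq : μ (Set.Icc (0:ℝ) 1 ×ˢ Set.Icc (0:ℝ) 1) = 1) (s : Set (ℝ × ℝ)) :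
    μ s = μ (s ∩ Set.Icc (0:ℝ) 1 ×ˢ Set.Icc (0:ℝ) 1) := by
  have hc : μ (Set.Icc (0:ℝ) 1 ×ˢ Set.Icc (0:ℝ) 1)ᶜ = 0 := by
    rw [measure_compl (by measurability) (measure_ne_top _ _), hsq, measure_univ]
    simp
  exact (measure_inter_conull hc).symm

variable {m : ℕ} {x : Fin m → ℝ}

lemma psum_nonneg (hx : ∀ i, 0 < x i) (i : Fin m) : 0 ≤ psum x i :=
  Finset.sum_nonneg fun j _ => le_of_lt (hx j)

lemma psum_add (i : Fin m) :
    psum x i + x i = ∑ j ∈ Finset.univ.filter (fun j => j ≤ i), x j := by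
  classical
  have h : Finset.univ.filter (fun j => j ≤ i) =
      insert i (Finset.univ.filter (fun j : Fin m => j < i)) := by
    ext j
    simp only [Finset.mem_insert, Finset.mem_filter, Finset.mem_univ, true_and]
    constructor
    · intro h; rcases eq_or_lt_of_le h with h | h
      · exact Or.inl h
      · exact Or.inr h
    · rintro (rfl | h); · exact le_refl _
      · exact le_of_lt h
  rw [h, Finset.sum_insert (by simp), psum]; ring

lemma psum_lt_le (hx : ∀ i, 0 < x i) (i1 i2 : Fin m) (h : i1 < i2) : psum x i1 + x i1 ≤ psum x i2 := by
  rw [psum_add]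
  refine Finset.sum_le_sum_of_subset_of_nonneg ?_ (fun j _ _ => le_of_lt (hx j))
  intro j hj
  simp only [Finset.mem_filter, Finset.mem_univ, true_and] at *
  exact lt_of_le_of_lt hj h

lemma psum_add_le_sum (hx : ∀ i, 0 < x i) (i : Fin m) : psum x i + x i ≤ ∑ j, x j := by
  rw [psum_add]
  exact Finset.sum_le_sum_of_subset_of_nonneg (Finset.filter_subset _ _)
    (fun j _ _ => le_of_lt (hx j))


end Helpers
section DS
open Set ENNReal

variable {m : ℕ}

noncomputable def etaDS (x : Fin m → ℝ) (i : Fin m) : ℝ × ℝ → ℝ × ℝ :=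
  fun z => (psum x i + x i * z.1, psum x i + x i * z.2)

lemma etaDS_measurable (x : Fin m → ℝ) (i : Fin m) : Measurable (etaDS x i) := by
  unfold etaDS; fun_prop

noncomputable def nuDS (Φ : Fin m → Permuton) (x : Fin m → ℝ) :
    Option (Fin m) → Measure (ℝ × ℝ)
  | none => (volume.restrict (Set.Icc (∑ i, x i) 1)).map (fun t : ℝ => (t, t))
  | some i => ENNReal.ofReal (x i) • ((Φ i).μ.map (etaDS x i))

noncomputable def loDS (x : Fin m → ℝ) : Option (Fin m) → ℝ
  | none => ∑ i, x i
  | some i => psum x i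

noncomputable def hiDS (x : Fin m → ℝ) : Option (Fin m) → ℝ
  | none => 1
  | some i => psum x i + x i

def QDS (x : Fin m → ℝ) : Option (Fin m) → Set (ℝ × ℝ)
  | none => {p : ℝ × ℝ | p.1 ∈ Icc (∑ i, x i) 1 ∧ p.2 = p.1}
  | some i => Icc (psum x i) (psum x i + x i) ×ˢ Icc (psum x i) (psum x i + x i)

lemma directSum_eq_sum (Φ : Fin m → Permuton) (x : Fin m → ℝ) :
    directSum m Φ x = ∑ j : Option (Fin m), nuDS Φ x j := by
  rw [Fintype.sum_option, add_comm]
  rfl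

lemma QDS_subset (x : Fin m → ℝ) (j : Option (Fin m)) :
    QDS x j ⊆ Icc (loDS x j) (hiDS x j) ×ˢ Icc (loDS x j) (hiDS x j) := by
  cases j with
  | none =>
    rintro p ⟨h1, h2⟩
    refine ⟨h1, ?_⟩
    show p.2 ∈ Icc (loDS x none) (hiDS x none)
    rw [h2]; exact h1
  | some i => exact subset_rfl

lemma loDS_nonneg (x : Fin m → ℝ) (hx : ∀ i, 0 < x i) (j : Option (Fin m)) :
    0 ≤ loDS x j := by
  cases j with
  | none => exact Finset.sum_nonneg fun i _ => le_of_lt (hx i)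
  | some i => exact psum_nonneg hx i

lemma hiDS_le_one (x : Fin m → ℝ) (hx : ∀ i, 0 < x i) (hsum : ∑ i, x i ≤ 1)
    (j : Option (Fin m)) : hiDS x j ≤ 1 := by
  cases j with
  | none => exact le_refl _
  | some i => exact le_trans (psum_add_le_sum hx i) hsum

lemma loDS_le_hiDS (x : Fin m → ℝ) (hx : ∀ i, 0 < x i) (hsum : ∑ i, x i ≤ 1)
    (j : Option (Fin m)) : loDS x j ≤ hiDS x j := by
  cases j with
  | none => exact hsum
  | some i => simp [loDS, hiDS, le_of_lt (hx i)]

lemma sepDS (x : Fin m → ℝ) (hx : ∀ i, 0 < x i) {j j' : Option (Fin m)} (h : j ≠ j') :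
    hiDS x j ≤ loDS x j' ∨ hiDS x j' ≤ loDS x j := by
  cases j with
  | none =>
    cases j' with
    | none => exact absurd rfl h
    | some i => exact Or.inr (psum_add_le_sum hx i)
  | some i =>
    cases j' with
    | none => exact Or.inl (psum_add_le_sum hx i)
    | some i' =>
      have hne : i ≠ i' := fun he => h (by rw [he])
      rcases lt_or_gt_of_ne hne with hlt | hlt
      · exact Or.inl (psum_lt_le hx i i' hlt)
      · exact Or.inr (psum_lt_le hx i' i hlt)

lemma QDS_meas (x : Fin m → ℝ) (j : Option (Fin m)) : MeasurableSet (QDS x j) := by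
  cases j with
  | none =>
    have : QDS x none = ((Set.Icc (∑ i, x i) 1) ×ˢ (univ : Set ℝ)) ∩ {p : ℝ × ℝ | p.2 = p.1} := by
      ext p; simp [QDS, and_comm]
    rw [this]
    exact (measurableSet_Icc.prod MeasurableSet.univ).inter
      (measurableSet_eq_fun measurable_snd measurable_fst)
  | some i => exact measurableSet_Icc.prod measurableSet_Icc

lemma permuton_sq (P : Permuton) : P.μ (Icc (0:ℝ) 1 ×ˢ Icc (0:ℝ) 1) = 1 := by
  simpa using P.margX 0 1 le_rfl zero_le_one le_rfl

lemma permuton_sq_compl (P : Permuton) : P.μ (Icc (0:ℝ) 1 ×ˢ Icc (0:ℝ) 1)ᶜ = 0 := by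
  haveI := P.prob
  rw [measure_compl (by measurability) (measure_ne_top _ _), permuton_sq, measure_univ]
  simp

lemma permuton_inter_sq (P : Permuton) (s : Set (ℝ × ℝ)) :
    P.μ s = P.μ (s ∩ Icc (0:ℝ) 1 ×ˢ Icc (0:ℝ) 1) :=
  (measure_inter_conull (permuton_sq_compl P)).symm

lemma nuDS_conc (Φ : Fin m → Permuton) (x : Fin m → ℝ) (hx : ∀ i, 0 < x i)
    (hsum : ∑ i, x i ≤ 1) (j : Option (Fin m)) : nuDS Φ x j (QDS x j)ᶜ = 0 := by
  cases j with
  | none =>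
    rw [nuDS, Measure.map_apply (by fun_prop) (QDS_meas x none).compl,
      Measure.restrict_apply ((QDS_meas x none).compl.preimage (by fun_prop))]
    have he : (fun t : ℝ => (t, t)) ⁻¹' (QDS x none)ᶜ ∩ Set.Icc (∑ i, x i) 1 = ∅ := by
      ext t
      simp only [Set.mem_inter_iff, Set.mem_preimage, Set.mem_compl_iff,
        Set.mem_empty_iff_false, iff_false, not_and]
      intro h ht
      exact h ⟨ht, rfl⟩
    rw [he, measure_empty]
  | some i =>
    rw [nuDS, Measure.smul_apply,
      Measure.map_apply (etaDS_measurable x i) (QDS_meas x (some i)).compl]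
    have hz : (Φ i).μ (etaDS x i ⁻¹' (QDS x (some i))ᶜ) = 0 := by
      refine measure_mono_null ?_ (permuton_sq_compl (Φ i))
      intro z hz
      simp only [Set.mem_preimage, Set.mem_compl_iff] at *
      intro hzsq
      apply hz
      obtain ⟨⟨hz11, hz12⟩, hz21, hz22⟩ := hzsq
      have hxi := le_of_lt (hx i)
      simp only [etaDS]
      constructor <;> simp only [Set.mem_Icc] <;> constructor
      · nlinarith
      · nlinarith
      · nlinarith
      · nlinarith
    rw [hz, smul_eq_mul, mul_zero]

instance nuDS_finite (Φ : Fin m → Permuton) (x : Fin m → ℝ) (j : Option (Fin m)) :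
    IsFiniteMeasure (nuDS Φ x j) := by
  cases j with
  | none =>
    constructor
    rw [nuDS, Measure.map_apply (by fun_prop) MeasurableSet.univ]
    simp only [Set.preimage_univ]
    rw [Measure.restrict_apply MeasurableSet.univ, Set.univ_inter, Real.volume_Icc]
    exact ofReal_lt_top
  | some i =>
    haveI := (Φ i).prob
    constructor
    rw [nuDS, Measure.smul_apply, smul_eq_mul]
    exact ENNReal.mul_lt_top ofReal_lt_top
      (lt_of_le_of_lt (measure_mono (Set.subset_univ _)) (by
        rw [Measure.map_apply (etaDS_measurable x i) MeasurableSet.univ]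
        simp [measure_lt_top]))
end DS
section DS2
open Set ENNReal

variable {m : ℕ}

lemma iUnion_IcoDS (x : Fin m → ℝ) (hx : ∀ i, 0 < x i) (hsum : ∑ i, x i ≤ 1) (hm : 0 < m) :
    ⋃ j : Option (Fin m), Ico (loDS x j) (hiDS x j) = Ico (0:ℝ) 1 := by
  classical
  apply Set.Subset.antisymm
  · intro t ht
    obtain ⟨j, hj⟩ := Set.mem_iUnion.1 ht
    exact ⟨le_trans (loDS_nonneg x hx j) hj.1, lt_of_lt_of_le hj.2 (hiDS_le_one x hx hsum j)⟩
  · rintro t ⟨ht0, ht1⟩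
    by_cases hct : (∑ i, x i) ≤ t
    · exact Set.mem_iUnion.2 ⟨none, hct, ht1⟩
    · push_neg at hct
      set c : ℕ → ℝ := fun n => ∑ j ∈ Finset.univ.filter (fun j : Fin m => (j : ℕ) < n), x j
        with hcdef
      have hc0 : c 0 = 0 := by simp [hcdef]
      have hcm : c m = ∑ i, x i := by
        rw [hcdef]
        exact Finset.sum_congr (Finset.filter_true_of_mem (fun j _ => j.is_lt)) (fun _ _ => rfl)
      have hcp : ∀ n (h : n < m), c n = psum x ⟨n, h⟩ := by
        intro n h
        show (∑ j ∈ Finset.univ.filter (fun j : Fin m => (j : ℕ) < n), x j) = _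
        rw [psum]
        exact Finset.sum_congr (by ext j; simp [Fin.lt_def]) (fun _ _ => rfl)
      have hcs : ∀ n (h : n < m), c (n + 1) = c n + x ⟨n, h⟩ := by
        intro n h
        show (∑ j ∈ Finset.univ.filter (fun j : Fin m => (j : ℕ) < n + 1), x j) =
          (∑ j ∈ Finset.univ.filter (fun j : Fin m => (j : ℕ) < n), x j) + x ⟨n, h⟩
        have hins : Finset.univ.filter (fun j : Fin m => (j : ℕ) < n + 1) =
            insert (⟨n, h⟩ : Fin m) (Finset.univ.filter (fun j : Fin m => (j : ℕ) < n)) := by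
          ext j
          simp only [Finset.mem_filter, Finset.mem_univ, true_and, Finset.mem_insert]
          constructor
          · intro hj
            rcases Nat.lt_succ_iff_lt_or_eq.1 hj with hj | hj
            · exact Or.inr hj
            · exact Or.inl (Fin.ext hj)
          · rintro (rfl | hj)
            · simp
            · omega
        rw [hins, Finset.sum_insert (by simp)]
        ring
      have hP0 : c 0 ≤ t := by rw [hc0]; exact ht0
      set n0 := Nat.findGreatest (fun n => c n ≤ t) (m - 1) with hn0
      have hn0le : n0 ≤ m - 1 := Nat.findGreatest_le _
      have hn0m : n0 < m := by omega
      have hPn0 : c n0 ≤ t := by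
        rw [hn0]
        exact Nat.findGreatest_spec (P := fun n => c n ≤ t) (Nat.zero_le _) hP0
      have hnext : t < c (n0 + 1) := by
        by_cases h : n0 + 1 ≤ m - 1
        · have := Nat.findGreatest_is_greatest (P := fun n => c n ≤ t)
            (lt_add_one n0) h
          exact lt_of_not_ge (by simpa using this)
        · have hne : n0 + 1 = m := by omega
          rw [hne, hcm]
          exact hct
      refine Set.mem_iUnion.2 ⟨some ⟨n0, hn0m⟩, ?_, ?_⟩
      · show psum x ⟨n0, hn0m⟩ ≤ t
        rw [← hcp n0 hn0m]; exact hPn0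
      · show t < psum x ⟨n0, hn0m⟩ + x ⟨n0, hn0m⟩
        rw [← hcp n0 hn0m, ← hcs n0 hn0m]; exact hnext

lemma directSum_rect (Φ : Fin m → Permuton) (x : Fin m → ℝ) (hx : ∀ i, 0 < x i)
    (hsum : ∑ i, x i ≤ 1) (hm : 0 < m) (a b : ℝ) (ha : 0 ≤ a) (hab : a ≤ b) (hb : b ≤ 1) :
    directSum m Φ x (Icc a b ×ˢ Icc (0:ℝ) 1) = ENNReal.ofReal (b - a) := by
  classical
  have hR : MeasurableSet (Icc a b ×ˢ Icc (0:ℝ) 1) := measurableSet_Icc.prod measurableSet_Icc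
  rw [directSum_eq_sum, Measure.finset_sum_apply]
  have hterm : ∀ j, nuDS Φ x j (Icc a b ×ˢ Icc (0:ℝ) 1)
      = volume (Icc a b ∩ Ico (loDS x j) (hiDS x j)) := by
    intro j
    cases j with
    | none =>
      rw [nuDS, Measure.map_apply (by fun_prop) hR,
        Measure.restrict_apply (hR.preimage (by fun_prop))]
      have hpre : (fun t : ℝ => (t, t)) ⁻¹' (Icc a b ×ˢ Icc (0:ℝ) 1) = Icc a b := by
        ext t
        simp only [Set.mem_preimage, Set.mem_prod, Set.mem_Icc]
        constructor
        · exact fun h => h.1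
        · intro h
          exact ⟨h, by linarith [h.1, h.2], by linarith [h.1, h.2]⟩
      rw [hpre]
      show volume (Icc a b ∩ Icc (∑ i, x i) 1) = _
      rw [vol_Icc_inter_Icc]
      show _ = volume (Icc a b ∩ Ico (∑ i, x i) 1)
      rw [vol_Icc_inter_Ico]
    | some i =>
      have hxi := hx i
      set cc := psum x i with hcc
      rw [nuDS, Measure.smul_apply, Measure.map_apply (etaDS_measurable x i) hR,
        permuton_inter_sq (Φ i)]
      have hset : etaDS x i ⁻¹' (Icc a b ×ˢ Icc (0:ℝ) 1) ∩ Icc (0:ℝ) 1 ×ˢ Icc (0:ℝ) 1 =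
          Icc (max ((a - cc) / x i) 0) (min ((b - cc) / x i) 1) ×ˢ Icc (0:ℝ) 1 := by
        have hc0 : 0 ≤ cc := psum_nonneg hx i
        have hc1 : cc + x i ≤ 1 := le_trans (psum_add_le_sum hx i) hsum
        ext z
        simp only [Set.mem_inter_iff, Set.mem_preimage, Set.mem_prod, Set.mem_Icc, etaDS,
          max_le_iff, le_min_iff, le_max_iff, min_le_iff]
        constructor
        · rintro ⟨⟨⟨h1, h2⟩, h3, h4⟩, ⟨h5, h6⟩, h7, h8⟩
          refine ⟨⟨⟨?_, h5⟩, ?_, h6⟩, h7, h8⟩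
          · rw [div_le_iff₀ hxi]; linarith
          · rw [le_div_iff₀ hxi]; linarith
        · rintro ⟨⟨⟨h1, h5⟩, h2, h6⟩, h7, h8⟩
          rw [div_le_iff₀ hxi] at h1
          rw [le_div_iff₀ hxi] at h2
          refine ⟨⟨⟨by linarith, by linarith⟩, ?_, ?_⟩, ⟨h5, h6⟩, h7, h8⟩
          · nlinarith
          · nlinarith
      rw [hset]
      have hmval : (Φ i).μ (Icc (max ((a - cc) / x i) 0) (min ((b - cc) / x i) 1) ×ˢ
          Icc (0:ℝ) 1) = ENNReal.ofReal (min ((b - cc) / x i) 1 - max ((a - cc) / x i) 0) := by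
        rcases le_or_gt (max ((a - cc) / x i) 0) (min ((b - cc) / x i) 1) with hle | hlt
        · exact (Φ i).margX _ _ (le_max_right _ _) hle (min_le_right _ _)
        · rw [Set.Icc_eq_empty (not_le.2 hlt), Set.empty_prod, measure_empty]
          symm
          rw [ENNReal.ofReal_eq_zero]
          linarith
      rw [hmval, smul_eq_mul, ← ENNReal.ofReal_mul (le_of_lt hxi)]
      have halg : x i * (min ((b - cc) / x i) 1 - max ((a - cc) / x i) 0) =
          min b (cc + x i) - max a cc := by
        have h1 : x i * min ((b - cc) / x i) 1 = min b (cc + x i) - cc := by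
          rcases le_total ((b - cc) / x i) 1 with h | h
          · rw [min_eq_left h, mul_div_cancel₀ _ (ne_of_gt hxi),
              min_eq_left (by rw [div_le_iff₀ hxi] at h; linarith)]
          · rw [min_eq_right h, mul_one,
              min_eq_right (by rw [le_div_iff₀ hxi] at h; linarith)]
            ring
        have h2 : x i * max ((a - cc) / x i) 0 = max a cc - cc := by
          rcases le_total ((a - cc) / x i) 0 with h | h
          · rw [max_eq_right h, mul_zero,
              max_eq_right (by rw [div_le_iff₀ hxi] at h; linarith)]
            ring
          · rw [max_eq_left h, mul_div_cancel₀ _ (ne_of_gt hxi),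
              max_eq_left (by rw [le_div_iff₀ hxi] at h; linarith)]
        rw [mul_sub, h1, h2]
        ring
      rw [halg]
      show _ = volume (Icc a b ∩ Ico cc (cc + x i))
      rw [vol_Icc_inter_Ico]
  rw [Finset.sum_congr rfl (fun j _ => hterm j)]
  have hdisj : Pairwise (Function.onFun Disjoint
      (fun j : Option (Fin m) => Icc a b ∩ Ico (loDS x j) (hiDS x j))) := by
    intro j j' hjj'
    have : Disjoint (Ico (loDS x j) (hiDS x j)) (Ico (loDS x j') (hiDS x j')) := by
      rw [Set.Ico_disjoint_Ico]
      rcases sepDS x hx hjj' with h | h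
      · exact le_trans (min_le_left _ _) (le_trans h (le_max_right _ _))
      · exact le_trans (min_le_right _ _) (le_trans h (le_max_left _ _))
    exact this.mono Set.inter_subset_right Set.inter_subset_right
  rw [← tsum_fintype (L := SummationFilter.unconditional (Option (Fin m))), ← measure_iUnion hdisj
    (fun j => measurableSet_Icc.inter measurableSet_Ico)]
  rw [← Set.inter_iUnion, iUnion_IcoDS x hx hsum hm, vol_Icc_inter_Ico,
    min_eq_left hb, max_eq_left ha]
end DS2
section DS3
open Set ENNReal

variable {m : ℕ}

noncomputable def swapP (P : Permuton) : Permuton where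
  μ := P.μ.map Prod.swap
  prob := by
    haveI := P.prob
    exact Measure.isProbabilityMeasure_map measurable_swap.aemeasurable
  margX := by
    intro a b ha hab hb
    rw [Measure.map_apply measurable_swap (measurableSet_Icc.prod measurableSet_Icc)]
    have h : Prod.swap ⁻¹' (Icc a b ×ˢ Icc (0:ℝ) 1) = Icc (0:ℝ) 1 ×ˢ Icc a b := by
      ext p
      simp only [Set.mem_preimage, Set.mem_prod, Prod.fst_swap, Prod.snd_swap]
      exact and_comm
    rw [h]
    exact P.margY a b ha hab hb
  margY := by
    intro a b ha hab hb
    rw [Measure.map_apply measurable_swap (measurableSet_Icc.prod measurableSet_Icc)]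
    have h : Prod.swap ⁻¹' (Icc (0:ℝ) 1 ×ˢ Icc a b) = Icc a b ×ˢ Icc (0:ℝ) 1 := by
      ext p
      simp only [Set.mem_preimage, Set.mem_prod, Prod.fst_swap, Prod.snd_swap]
      exact and_comm
    rw [h]
    exact P.margX a b ha hab hb

lemma map_swap_directSum (Φ : Fin m → Permuton) (x : Fin m → ℝ) :
    (directSum m Φ x).map Prod.swap = directSum m (fun i => swapP (Φ i)) x := by
  ext s hs
  rw [Measure.map_apply measurable_swap hs]
  rw [directSum, directSum]
  rw [Measure.add_apply, Measure.add_apply]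
  congr 1
  · rw [Measure.finset_sum_apply, Measure.finset_sum_apply]
    refine Finset.sum_congr rfl fun i _ => ?_
    rw [Measure.smul_apply, Measure.smul_apply]
    congr 1
    have hη : Measurable (fun z : ℝ × ℝ => (psum x i + x i * z.1, psum x i + x i * z.2)) :=
      etaDS_measurable x i
    rw [Measure.map_apply hη (hs.preimage measurable_swap)]
    show _ = ((swapP (Φ i)).μ.map _) s
    rw [Measure.map_apply hη hs, swapP]
    show _ = ((Φ i).μ.map Prod.swap) _
    rw [Measure.map_apply measurable_swap (hs.preimage hη)]
    congr 1
  · have hd : Measurable (fun t : ℝ => (t, t)) := by fun_prop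
    rw [Measure.map_apply hd (hs.preimage measurable_swap), Measure.map_apply hd hs]
    congr 1

lemma directSum_rectY (Φ : Fin m → Permuton) (x : Fin m → ℝ) (hx : ∀ i, 0 < x i)
    (hsum : ∑ i, x i ≤ 1) (hm : 0 < m) (a b : ℝ) (ha : 0 ≤ a) (hab : a ≤ b) (hb : b ≤ 1) :
    directSum m Φ x (Icc (0:ℝ) 1 ×ˢ Icc a b) = ENNReal.ofReal (b - a) := by
  have h : Icc (0:ℝ) 1 ×ˢ Icc a b = Prod.swap ⁻¹' (Icc a b ×ˢ Icc (0:ℝ) 1) := by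
    ext p
    simp only [Set.mem_preimage, Set.mem_prod, Prod.fst_swap, Prod.snd_swap]
    exact and_comm.symm
  rw [h, ← Measure.map_apply measurable_swap (measurableSet_Icc.prod measurableSet_Icc),
    map_swap_directSum]
  exact directSum_rect _ x hx hsum hm a b ha hab hb

lemma directSum_univ (Φ : Fin m → Permuton) (x : Fin m → ℝ) (hx : ∀ i, 0 < x i)
    (hsum : ∑ i, x i ≤ 1) (hm : 0 < m) : directSum m Φ x univ = 1 := by
  have h1 : directSum m Φ x (Icc (0:ℝ) 1 ×ˢ Icc (0:ℝ) 1) = 1 := by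
    simpa using directSum_rect Φ x hx hsum hm 0 1 le_rfl zero_le_one le_rfl
  have h2 : directSum m Φ x (Icc (0:ℝ) 1 ×ˢ Icc (0:ℝ) 1)ᶜ = 0 := by
    rw [directSum_eq_sum, Measure.finset_sum_apply]
    refine Finset.sum_eq_zero fun j _ => ?_
    refine measure_mono_null ?_ (nuDS_conc Φ x hx hsum j)
    refine Set.compl_subset_compl.2 ?_
    refine subset_trans (QDS_subset x j) ?_
    rintro p ⟨hp1, hp2⟩
    exact ⟨⟨le_trans (loDS_nonneg x hx j) hp1.1, le_trans hp1.2 (hiDS_le_one x hx hsum j)⟩,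
      ⟨le_trans (loDS_nonneg x hx j) hp2.1, le_trans hp2.2 (hiDS_le_one x hx hsum j)⟩⟩
  apply le_antisymm
  · calc directSum m Φ x univ
        ≤ directSum m Φ x (Icc (0:ℝ) 1 ×ˢ Icc (0:ℝ) 1) +
          directSum m Φ x (Icc (0:ℝ) 1 ×ˢ Icc (0:ℝ) 1)ᶜ := by
          rw [← Set.union_compl_self (Icc (0:ℝ) 1 ×ˢ Icc (0:ℝ) 1)]
          exact measure_union_le _ _
      _ = 1 := by rw [h1, h2, add_zero]
  · rw [← h1]
    exact measure_mono (Set.subset_univ _)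

noncomputable def dsPermuton (Φ : Fin m → Permuton) (x : Fin m → ℝ) (hx : ∀ i, 0 < x i)
    (hsum : ∑ i, x i ≤ 1) (hm : 0 < m) : Permuton where
  μ := directSum m Φ x
  prob := ⟨directSum_univ Φ x hx hsum hm⟩
  margX := fun a b ha hab hb => directSum_rect Φ x hx hsum hm a b ha hab hb
  margY := fun a b ha hab hb => directSum_rectY Φ x hx hsum hm a b ha hab hb

end DS3
section DSMain
open Set ENNReal

lemma downclosed_mem_iff {k : ℕ} (A : Finset (Fin k))
    (hd : ∀ v w : Fin k, v ∈ A → w ≤ v → w ∈ A) (i : Fin k) :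
    i ∈ A ↔ (i : ℕ) < A.card := by
  constructor
  · intro hv
    have hsub : Finset.Iic i ⊆ A := fun w hw => hd i w hv (Finset.mem_Iic.1 hw)
    have := Finset.card_le_card hsub
    rw [Fin.card_Iic] at this
    omega
  · intro hv
    by_contra hvS
    have hsub : A ⊆ Finset.Iio i := by
      intro s hs
      rw [Finset.mem_Iio]
      by_contra hle
      exact hvS (hd s i hs (le_of_not_gt hle))
    have := Finset.card_le_card hsub
    rw [Fin.card_Iio] at this
    omega

instance mapEta_finite {m : ℕ} (P : Permuton) (x : Fin m → ℝ) (i : Fin m) :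
    IsFiniteMeasure (P.μ.map (etaDS x i)) := by
  haveI := P.prob
  constructor
  rw [Measure.map_apply (etaDS_measurable x i) MeasurableSet.univ]
  simp [measure_lt_top]

end DSMain
/-- **Observation (direct sums).** For a non-trivial indecomposable permutation
`τ` of order `k`, permutons `Φ_1,…,Φ_m` and positive weights `x_i` with
`Σ x_i ≤ 1`, the direct sum `Φ^x = ⊕_i (x_i, Φ_i)` is a permuton and satisfies
`t(τ,Φ^x) = Σ_i x_i^k · t(τ,Φ_i)`. -/
theorem pdens_directSum {k : ℕ} (hk : 2 ≤ k) (τ : Equiv.Perm (Fin k))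
    (hτ : Indecomposable τ) (m : ℕ) (hm : 0 < m) (Φ : Fin m → Permuton)
    (x : Fin m → ℝ) (hx : ∀ i, 0 < x i) (hsum : ∑ i, x i ≤ 1) :
    ∃ P : Permuton, P.μ = directSum m Φ x ∧
      pdens τ P = ∑ i : Fin m, x i ^ k * pdens τ (Φ i) := by
  classical
  haveI : ∀ i, IsProbabilityMeasure (Φ i).μ := fun i => (Φ i).prob
  refine ⟨dsPermuton Φ x hx hsum hm, rfl, ?_⟩
  set S : Set (Fin k → ℝ × ℝ) := {g : Fin k → ℝ × ℝ |
      (∀ i j : Fin k, i < j → (g i).1 < (g j).1) ∧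
      (∀ i j : Fin k, (g i).2 < (g j).2 ↔ τ i < τ j)} with hSdef
  have hSmeas : MeasurableSet S := by
    have hS1 : S = (⋂ i, ⋂ j, {g : Fin k → ℝ × ℝ | i < j → (g i).1 < (g j).1}) ∩
        (⋂ i, ⋂ j, {g : Fin k → ℝ × ℝ | (g i).2 < (g j).2 ↔ τ i < τ j}) := by
      ext g
      simp only [hSdef, Set.mem_setOf_eq, Set.mem_inter_iff, Set.mem_iInter]
    rw [hS1]
    have hco1 : ∀ i : Fin k, Measurable fun g : Fin k → ℝ × ℝ => (g i).1 :=
      fun i => (measurable_pi_apply i).fst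
    have hco2 : ∀ i : Fin k, Measurable fun g : Fin k → ℝ × ℝ => (g i).2 :=
      fun i => (measurable_pi_apply i).snd
    refine MeasurableSet.inter (MeasurableSet.iInter fun i => MeasurableSet.iInter fun j => ?_)
      (MeasurableSet.iInter fun i => MeasurableSet.iInter fun j => ?_)
    · by_cases hij : i < j
      · simp only [hij, true_implies]
        exact measurableSet_lt (hco1 i) (hco1 j)
      · simp only [hij, false_implies]
        exact MeasurableSet.univ
    · by_cases hij : τ i < τ j
      · simp only [hij, iff_true]
        exact measurableSet_lt (hco2 i) (hco2 j)
      · simp only [hij, iff_false, ← Set.compl_setOf]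
        exact (measurableSet_lt (hco2 i) (hco2 j)).compl
  have hz0 : 0 < k := by omega
  set z0 : Fin k := ⟨0, hz0⟩ with hz0def
  -- the zero terms
  have hbad : ∀ f : Fin k → Option (Fin m), (¬ ∃ i : Fin m, f = fun _ => some i) →
      Measure.pi (fun i => nuDS Φ x (f i)) S = 0 := by
    intro f hf
    refine pi_zero_of_conc _ (fun i' => QDS x (f i')) (fun i' => QDS_meas x (f i'))
      (fun i' => nuDS_conc Φ x hx hsum (f i')) S ?_
    ext g
    simp only [Set.mem_inter_iff, Set.mem_setOf_eq, Set.mem_empty_iff_false, iff_false, not_and]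
    rintro ⟨hg1, hg2⟩ hq
    -- helper facts
    have hsub1 : ∀ i' : Fin k, (g i').1 ∈ Set.Icc (loDS x (f i')) (hiDS x (f i')) :=
      fun i' => (QDS_subset x (f i') (hq i')).1
    have hsub2 : ∀ i' : Fin k, (g i').2 ∈ Set.Icc (loDS x (f i')) (hiDS x (f i')) :=
      fun i' => (QDS_subset x (f i') (hq i')).2
    have hkey : ∀ i i' : Fin k, i < i' → f i ≠ f i' → hiDS x (f i) ≤ loDS x (f i') := by
      intro i i' hlt hne
      rcases sepDS x hx hne with h | h
      · exact h
      · exfalso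
        have h1 := (hsub1 i).1
        have h2 := (hsub1 i').2
        have h3 := hg1 i i' hlt
        linarith
    by_cases hconst : ∀ i', f i' = f z0
    · -- constant; must be constant `none`
      have hnone : f z0 = none := by
        by_contra hnn
        obtain ⟨i, hi⟩ := Option.ne_none_iff_exists'.1 hnn
        exact hf ⟨i, funext fun i' => by rw [hconst i', hi]⟩
      have hdiag : ∀ i' : Fin k, (g i').2 = (g i').1 := by
        intro i'
        have := hq i'
        rw [hconst i', hnone] at this
        exact this.2
      have hcross : ∀ i i' : Fin k, (i : ℕ) < 1 → 1 ≤ (i' : ℕ) → τ i < τ i' := by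
        intro i i' h1 h2
        have hlt : i < i' := by rw [Fin.lt_def]; omega
        refine (hg2 i i').1 ?_
        rw [hdiag i, hdiag i']
        exact hg1 i i' hlt
      exact hτ ⟨1, le_refl 1, by omega, cut_of_cross τ 1 (le_refl 1) (by omega) hcross⟩
    · -- nonconstant
      push_neg at hconst
      obtain ⟨i1, hi1⟩ := hconst
      set A : Finset (Fin k) := Finset.univ.filter (fun i => f i = f z0) with hA
      have hdown : ∀ v w : Fin k, v ∈ A → w ≤ v → w ∈ A := by
        intro v w hv hwv
        simp only [hA, Finset.mem_filter, Finset.mem_univ, true_and] at hv ⊢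
        by_contra hne
        have hwz : w ≠ z0 := fun h => hne (by rw [h])
        have hz0w : z0 < w := by
          rw [Fin.lt_def]
          have hwn : (w : ℕ) ≠ 0 := fun h0 => hwz (Fin.ext (by simp [hz0def, h0]))
          simp only [hz0def]
          omega
        have hwv' : w < v := by
          rcases eq_or_lt_of_le hwv with h | h
          · exact absurd (by rw [h]; exact hv) hne
          · exact h
        have hk1 := hkey z0 w hz0w (fun h => hne h.symm)
        have h1 := (hsub1 v).2
        have h2 := (hsub1 w).1
        have h3 := hg1 w v hwv'
        rw [hv] at h1
        linarith
      have hmemA : ∀ i : Fin k, i ∈ A ↔ (i : ℕ) < A.card := downclosed_mem_iff A hdown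
      have hz0A : z0 ∈ A := by simp [hA]
      have hj1 : 1 ≤ A.card := Finset.card_pos.2 ⟨z0, hz0A⟩
      have hjk : A.card < k := by
        have hle : A.card ≤ k := by simpa using Finset.card_le_univ A
        rcases lt_or_eq_of_le hle with h | h
        · exact h
        · exfalso
          have hAu : A = Finset.univ := Finset.eq_univ_of_card A (by simp [h])
          have hmem : i1 ∈ A := hAu ▸ Finset.mem_univ i1
          simp only [hA, Finset.mem_filter, Finset.mem_univ, true_and] at hmem
          exact hi1 hmem
      have hcross : ∀ i i' : Fin k, (i : ℕ) < A.card → A.card ≤ (i' : ℕ) → τ i < τ i' := by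
        intro i i' h1 h2
        have hiA : i ∈ A := (hmemA i).2 h1
        have hi'A : i' ∉ A := fun h => by rw [hmemA] at h; omega
        have hlt : i < i' := by rw [Fin.lt_def]; omega
        simp only [hA, Finset.mem_filter, Finset.mem_univ, true_and] at hiA hi'A
        have hne : f i ≠ f i' := by rw [hiA]; exact fun h => hi'A h.symm
        have hk1 := hkey i i' hlt hne
        have hy1 := (hsub2 i).2
        have hy2 := (hsub2 i').1
        have hyne : (g i).2 ≠ (g i').2 := by
          intro heq
          have hn1 : ¬ τ i < τ i' := fun h => by
            have := (hg2 i i').2 h; rw [heq] at this; exact lt_irrefl _ this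
          have hn2 : ¬ τ i' < τ i := fun h => by
            have := (hg2 i' i).2 h; rw [heq] at this; exact lt_irrefl _ this
          have : τ i = τ i' := le_antisymm (le_of_not_gt hn2) (le_of_not_gt hn1)
          have := τ.injective this
          rw [this] at hlt
          exact lt_irrefl _ hlt
        exact (hg2 i i').1 (lt_of_le_of_ne (by linarith) hyne)
      exact hτ ⟨A.card, hj1, hjk, cut_of_cross τ A.card hj1 hjk hcross⟩
  have hexp : Measure.pi (fun _ : Fin k => directSum m Φ x) =
      ∑ f : Fin k → Option (Fin m), Measure.pi (fun i => nuDS Φ x (f i)) := by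
    have h0 : (fun _ : Fin k => directSum m Φ x) =
        (fun _ : Fin k => ∑ j : Option (Fin m), nuDS Φ x j) := by
      funext _; exact directSum_eq_sum Φ x
    rw [h0]
    exact pi_finset_sum _
  have hgood : ∀ i : Fin m,
      Measure.pi (fun _ : Fin k => nuDS Φ x (some i)) S =
        ENNReal.ofReal (x i) ^ k * Measure.pi (fun _ : Fin k => (Φ i).μ) S := by
    intro i
    have h1 : Measure.pi (fun _ : Fin k => nuDS Φ x (some i)) =
        (ENNReal.ofReal (x i)) ^ k • Measure.pi (fun _ : Fin k => (Φ i).μ.map (etaDS x i)) := by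
      have h2 : (fun _ : Fin k => nuDS Φ x (some i)) =
          (fun _ : Fin k => ENNReal.ofReal (x i) • ((Φ i).μ.map (etaDS x i))) := rfl
      rw [h2, pi_smul_const _ ENNReal.ofReal_ne_top _, Fintype.card_fin]
    have hmp : MeasurePreserving (fun g (i' : Fin k) => etaDS x i (g i'))
        (Measure.pi fun _ : Fin k => (Φ i).μ)
        (Measure.pi fun _ : Fin k => (Φ i).μ.map (etaDS x i)) :=
      measurePreserving_pi _ _ (fun _ => ⟨etaDS_measurable x i, rfl⟩)
    have hpre : (fun g (i' : Fin k) => etaDS x i (g i')) ⁻¹' S = S := by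
      have haux : ∀ u v : ℝ, (psum x i + x i * u < psum x i + x i * v) ↔ u < v := by
        intro u v
        rw [add_lt_add_iff_left, mul_lt_mul_iff_right₀ (hx i)]
      ext g
      simp only [Set.mem_preimage, hSdef, Set.mem_setOf_eq, etaDS]
      constructor
      · rintro ⟨h1, h2⟩
        exact ⟨fun a b hab => (haux _ _).1 (h1 a b hab),
          fun a b => (haux _ _).symm.trans (h2 a b)⟩
      · rintro ⟨h1, h2⟩
        exact ⟨fun a b hab => (haux _ _).2 (h1 a b hab),
          fun a b => (haux _ _).trans (h2 a b)⟩
    rw [h1, Measure.smul_apply, smul_eq_mul,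
      ← hmp.measure_preimage hSmeas.nullMeasurableSet, hpre]
  have hpiS : Measure.pi (fun _ : Fin k => directSum m Φ x) S =
      ∑ i : Fin m, ENNReal.ofReal (x i) ^ k * Measure.pi (fun _ : Fin k => (Φ i).μ) S := by
    rw [hexp, Measure.finset_sum_apply]
    have hinj : ∀ a ∈ (Finset.univ : Finset (Fin m)), ∀ b ∈ (Finset.univ : Finset (Fin m)),
        ((fun _ : Fin k => some a) : Fin k → Option (Fin m)) = (fun _ => some b) → a = b := by
      intro a _ b _ hab
      have := congrFun hab z0
      simpa using this
    rw [← Finset.sum_subset (Finset.subset_univ ((Finset.univ : Finset (Fin m)).image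
        (fun i : Fin m => ((fun _ : Fin k => some i) : Fin k → Option (Fin m)))))
      (fun f _ hfim => hbad f (fun ⟨i, hfi⟩ =>
        hfim (Finset.mem_image.2 ⟨i, Finset.mem_univ i, hfi.symm⟩)))]
    rw [Finset.sum_image hinj]
    exact Finset.sum_congr rfl fun i _ => hgood i
  have hpd : pdens τ (dsPermuton Φ x hx hsum hm) =
      (k.factorial : ℝ) * (Measure.pi (fun _ : Fin k => directSum m Φ x) S).toReal := rfl
  have hpdi : ∀ i : Fin m, pdens τ (Φ i) =
      (k.factorial : ℝ) * (Measure.pi (fun _ : Fin k => (Φ i).μ) S).toReal := fun i => rfl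
  haveI : ∀ i : Fin m, IsProbabilityMeasure (Measure.pi (fun _ : Fin k => (Φ i).μ)) :=
    fun i => Measure.pi.instIsProbabilityMeasure _
  have hne : ∀ i ∈ (Finset.univ : Finset (Fin m)),
      ENNReal.ofReal (x i) ^ k * Measure.pi (fun _ : Fin k => (Φ i).μ) S ≠ ⊤ :=
    fun i _ => ENNReal.mul_ne_top (ENNReal.pow_ne_top ENNReal.ofReal_ne_top)
      (measure_ne_top _ _)
  rw [hpd, hpiS, ENNReal.toReal_sum hne, Finset.mul_sum]
  refine Finset.sum_congr rfl fun i _ => ?_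
  rw [hpdi i, ENNReal.toReal_mul, ← ENNReal.ofReal_pow (le_of_lt (hx i)),
    ENNReal.toReal_ofReal (pow_nonneg (le_of_lt (hx i)) k)]
  ring
end
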